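/- arXiv:1911.04961 — 5 statements merged into one kernel-verified Lean document; each statement's English description precedes it below -/
import Mathlib

section
/- Let G be a 3-γc-critical graph, u and v non-adjacent vertices, and D a minimum connected dominating set of G + uv with u ∈ D and v ∉ D. Then no vertex of D is adjacent in G to v. -/
open SimpleGraph Finset

variable {V : Type*}

/-- The graph `G` with the extra edge `uv` added. -/
def SimpleGraph.addEdge (G : SimpleGraph V) (u v : V) : SimpleGraph V :=
  G ⊔ SimpleGraph.fromEdgeSet {s(u, v)}

/-- `D` is a connected dominating set of `G`. -/
def SimpleGraph.IsCDS (G : SimpleGraph V) (D : Set V) : Prop :=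
  (∀ v : V, v ∈ D ∨ ∃ u ∈ D, G.Adj u v) ∧ (G.induce D).Connected

/-- The connected domination number. -/
noncomputable def SimpleGraph.cdn [Fintype V] (G : SimpleGraph V) : ℕ :=
  sInf {n | ∃ D : Finset V, D.card = n ∧ G.IsCDS ↑D}

/-- `G` is a `3`-`γ_c`-critical graph. -/
def SimpleGraph.IsCritical3 [Fintype V] (G : SimpleGraph V) : Prop :=
  G.Connected ∧ G.cdn = 3 ∧
    ∀ u v : V, u ≠ v → ¬G.Adj u v → (G.addEdge u v).cdn < 3

/-- `s` is an independent set of `G`. -/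
def SimpleGraph.IsIndepSet' (G : SimpleGraph V) (s : Set V) : Prop :=
  s.Pairwise (fun a b => ¬G.Adj a b)

/-- The independence number. -/
noncomputable def SimpleGraph.indepNum' [Fintype V] (G : SimpleGraph V) : ℕ :=
  sSup {n | ∃ s : Finset V, G.IsIndepSet' ↑s ∧ s.card = n}

/-- `S` is a vertex cut: removing it leaves a non-connected graph. -/
def SimpleGraph.IsVertexCut [Fintype V] (G : SimpleGraph V) (S : Finset V) : Prop :=
  ¬(G.induce ((↑S : Set V)ᶜ)).Connected

/-- The vertex connectivity: minimum size of a vertex cut. -/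
noncomputable def SimpleGraph.conn [Fintype V] (G : SimpleGraph V) : ℕ :=
  sInf {n | ∃ S : Finset V, S.card = n ∧ G.IsVertexCut S}

theorem stmt_2 {V : Type*} [Fintype V] (G : SimpleGraph V)
    (hG : G.IsCritical3) (u v : V) (huv : u ≠ v) (hadj : ¬G.Adj u v)
    (D : Finset V) (hD : (G.addEdge u v).IsCDS ↑D)
    (hmin : ∀ D' : Finset V, (G.addEdge u v).IsCDS ↑D' → D.card ≤ D'.card)
    (huD : u ∈ D) (hvD : v ∉ D) :
    ∀ x ∈ D, ¬G.Adj x v := by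
  intro x hx hxv
  obtain ⟨hGconn, hcdn3, hcrit⟩ := hG
  have hlt := hcrit u v huv hadj
  -- D is also a CDS of G
  have hDG : G.IsCDS ↑D := by
    obtain ⟨hdom, hconn⟩ := hD
    constructor
    · intro w
      rcases hdom w with h | ⟨d, hd, hadj'⟩
      · exact Or.inl h
      · rcases hadj' with h | h
        · exact Or.inr ⟨d, hd, h⟩
        · rw [SimpleGraph.fromEdgeSet_adj] at h
          obtain ⟨hmem, hne⟩ := h
          simp only [Set.mem_singleton_iff, Sym2.eq, Sym2.rel_iff', Prod.mk.injEq,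
            Prod.swap_prod_mk] at hmem
          rcases hmem with ⟨rfl, rfl⟩ | ⟨rfl, rfl⟩
          · exact Or.inr ⟨x, hx, hxv⟩
          · exact absurd hd hvD
    · have heq : (G.induce (↑D : Set V)) = ((G.addEdge u v).induce ↑D) := by
        ext a b
        simp only [SimpleGraph.comap_adj, Function.Embedding.coe_subtype,
          SimpleGraph.addEdge, SimpleGraph.sup_adj, SimpleGraph.fromEdgeSet_adj,
          Set.mem_singleton_iff, Sym2.eq, Sym2.rel_iff', Prod.mk.injEq, Prod.swap_prod_mk]
        constructor
        · exact Or.inl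
        · rintro (h | ⟨(⟨h1, h2⟩ | ⟨h1, h2⟩), hne⟩)
          · exact h
          · exact absurd (h2 ▸ b.2) hvD
          · exact absurd (h1 ▸ a.2) hvD
      rw [heq]
      exact hconn
  have hle : G.cdn ≤ D.card := Nat.sInf_le ⟨D, rfl, hDG⟩
  have hne : {n | ∃ D' : Finset V, D'.card = n ∧ (G.addEdge u v).IsCDS ↑D'}.Nonempty :=
    ⟨D.card, D, rfl, hD⟩
  obtain ⟨D', hD'card, hD'⟩ := Nat.sInf_mem hne
  have h1 : D.card ≤ D'.card := hmin D' hD'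
  have h2 : D'.card < 3 := by
    rw [hD'card]
    exact hlt
  omega
end

section
/- Let G be a 3-γc-critical graph and let b1, b2, b3 be three pairwise non-adjacent vertices of G. Then every minimum connected dominating set of G + b1b2 has the form {b1, b} or {b2, b} for some vertex b of G. -/
open SimpleGraph Finset

variable {V : Type*}

theorem stmt_3 {V : Type*} [Fintype V] [DecidableEq V] (G : SimpleGraph V)
    (hG : G.IsCritical3) (b1 b2 b3 : V)
    (h12 : b1 ≠ b2) (h13 : b1 ≠ b3) (h23 : b2 ≠ b3)
    (ha12 : ¬G.Adj b1 b2) (ha13 : ¬G.Adj b1 b3) (ha23 : ¬G.Adj b2 b3)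
    (D : Finset V) (hD : (G.addEdge b1 b2).IsCDS ↑D)
    (hmin : ∀ D' : Finset V, (G.addEdge b1 b2).IsCDS ↑D' → D.card ≤ D'.card) :
    ∃ b : V, D = {b1, b} ∨ D = {b2, b} := by
  classical
  set G' := G.addEdge b1 b2 with hG'def
  -- |D| ≤ 2
  have hlt : G'.cdn < 3 := hG.2.2 b1 b2 h12 ha12
  have hne : Set.Nonempty {n | ∃ D' : Finset V, D'.card = n ∧ G'.IsCDS ↑D'} :=
    ⟨D.card, D, rfl, hD⟩
  obtain ⟨D0, hD0card, hD0⟩ := Nat.sInf_mem hne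
  have hcard : D.card ≤ 2 := by
    have h1 := hmin D0 hD0
    have : G'.cdn = sInf {n | ∃ D' : Finset V, D'.card = n ∧ G'.IsCDS ↑D'} := rfl
    omega
  -- D nonempty
  have hV : Nonempty V := hG.1.nonempty
  obtain ⟨v0⟩ := hV
  have hDne : D.Nonempty := by
    rcases hD.1 v0 with h | ⟨u, hu, _⟩
    · exact ⟨v0, by exact_mod_cast h⟩
    · exact ⟨u, by exact_mod_cast hu⟩
  -- b1 ∈ D or b2 ∈ D
  have hmem : b1 ∈ D ∨ b2 ∈ D := by
    by_contra h
    push_neg at h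
    obtain ⟨h1, h2⟩ := h
    have hadj : ∀ u ∈ D, ∀ v : V, G'.Adj u v → G.Adj u v := by
      intro u hu v huv
      rcases huv with h' | h'
      · exact h'
      · rw [SimpleGraph.fromEdgeSet_adj] at h'
        obtain ⟨hs, -⟩ := h'
        simp only [Set.mem_singleton_iff, Sym2.eq_iff] at hs
        rcases hs with ⟨rfl, rfl⟩ | ⟨rfl, rfl⟩
        · exact absurd hu h1
        · exact absurd hu h2
    have hCDS : G.IsCDS ↑D := by
      constructor
      · intro v
        rcases hD.1 v with hv | ⟨u, hu, huv⟩
        · exact Or.inl hv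
        · exact Or.inr ⟨u, hu, hadj u (by exact_mod_cast hu) v huv⟩
      · have heq : G.induce (↑D : Set V) = G'.induce (↑D : Set V) := by
          ext ⟨a, ha⟩ ⟨b, hb⟩
          simp only [SimpleGraph.comap_adj, Function.Embedding.coe_subtype]
          constructor
          · intro h'
            exact Or.inl h'
          · intro h'
            exact hadj a (by exact_mod_cast ha) b h'
        rw [heq]
        exact hD.2
    have hle : G.cdn ≤ D.card := Nat.sInf_le ⟨D, rfl, hCDS⟩
    have h3 := hG.2.1
    omega
  -- conclude
  have hcard1 : 1 ≤ D.card := Finset.card_pos.mpr hDne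
  rcases hmem with hb | hb
  · by_cases hc : D.card = 1
    · obtain ⟨a, ha⟩ := Finset.card_eq_one.mp hc
      have : b1 = a := by rw [ha] at hb; simpa using hb
      refine ⟨b1, Or.inl ?_⟩
      rw [ha, ← this]
      simp
    · have hc2 : D.card = 2 := by omega
      have : (D.erase b1).card = 1 := by
        rw [Finset.card_erase_of_mem hb, hc2]
      obtain ⟨b, hbb⟩ := Finset.card_eq_one.mp this
      refine ⟨b, Or.inl ?_⟩
      rw [← Finset.insert_erase hb, hbb]
  · by_cases hc : D.card = 1
    · obtain ⟨a, ha⟩ := Finset.card_eq_one.mp hc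
      have : b2 = a := by rw [ha] at hb; simpa using hb
      refine ⟨b2, Or.inr ?_⟩
      rw [ha, ← this]
      simp
    · have hc2 : D.card = 2 := by omega
      have : (D.erase b2).card = 1 := by
        rw [Finset.card_erase_of_mem hb, hc2]
      obtain ⟨b, hbb⟩ := Finset.card_eq_one.mp this
      refine ⟨b, Or.inr ?_⟩
      rw [← Finset.insert_erase hb, hbb]
end

section
/- Every 3-γc-critical graph G satisfies α(G) ≤ κ(G) + 2, where α is the independence number and κ is the vertex connectivity. -/
open SimpleGraph Finset

variable {V : Type*}

lemma addEdge_adj (G : SimpleGraph V) {a b : V} (hab : a ≠ b) (x y : V) :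
    (G.addEdge a b).Adj x y ↔ G.Adj x y ∨ ((x = a ∧ y = b) ∨ (x = b ∧ y = a)) := by
  simp only [SimpleGraph.addEdge, sup_adj, fromEdgeSet_adj, Set.mem_singleton_iff,
    Sym2.eq_iff]
  constructor
  · rintro (h | ⟨(⟨rfl, rfl⟩ | ⟨rfl, rfl⟩), hne⟩)
    · exact Or.inl h
    · exact Or.inr (Or.inl ⟨rfl, rfl⟩)
    · exact Or.inr (Or.inr ⟨rfl, rfl⟩)
  · rintro (h | (⟨rfl, rfl⟩ | ⟨rfl, rfl⟩))
    · exact Or.inl h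
    · exact Or.inr ⟨Or.inl ⟨rfl, rfl⟩, hab⟩
    · exact Or.inr ⟨Or.inr ⟨rfl, rfl⟩, hab.symm⟩

lemma connected_pair_of_adj (G : SimpleGraph V) {p w : V} (h : G.Adj p w) :
    (G.induce ({p, w} : Set V)).Connected := by
  have hp : p ∈ ({p, w} : Set V) := by simp
  have hw : w ∈ ({p, w} : Set V) := by simp
  rw [connected_iff]
  refine ⟨?_, ⟨⟨p, hp⟩⟩⟩
  intro u v
  have hmem : ∀ z : ({p, w} : Set V), z.1 = p ∨ z.1 = w := by
    rintro ⟨z, hz⟩; simpa using hz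
  have hadj : (G.induce ({p, w} : Set V)).Adj ⟨p, hp⟩ ⟨w, hw⟩ := h
  rcases hmem u with h1 | h1 <;> rcases hmem v with h2 | h2
  · rw [show u = v from Subtype.ext (h1.trans h2.symm)]
  · rw [show u = ⟨p, hp⟩ from Subtype.ext h1, show v = ⟨w, hw⟩ from Subtype.ext h2]
    exact hadj.reachable
  · rw [show u = ⟨w, hw⟩ from Subtype.ext h1, show v = ⟨p, hp⟩ from Subtype.ext h2]
    exact hadj.symm.reachable
  · rw [show u = v from Subtype.ext (h1.trans h2.symm)]

lemma connected_singleton (G : SimpleGraph V) (u : V) :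
    (G.induce ({u} : Set V)).Connected := by
  rw [connected_iff]
  refine ⟨?_, ⟨⟨u, by simp⟩⟩⟩
  rintro ⟨x, hx⟩ ⟨y, hy⟩
  simp only [Set.mem_singleton_iff] at hx hy
  subst hx; subst hy; rfl

lemma adj_of_connected_pair (H : SimpleGraph V) {u w : V} (hne : u ≠ w)
    (hc : (H.induce ({u, w} : Set V)).Connected) : H.Adj u w := by
  have hu : u ∈ ({u, w} : Set V) := by simp
  have hw : w ∈ ({u, w} : Set V) := by simp
  obtain ⟨p⟩ := hc.preconnected ⟨u, hu⟩ ⟨w, hw⟩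
  have key : ∀ {x y : ({u, w} : Set V)} (_ : (H.induce ({u, w} : Set V)).Walk x y),
      x.1 ≠ y.1 → H.Adj u w := by
    intro x y p
    induction p with
    | nil => intro h; exact absurd rfl h
    | @cons x z y hadj p ih =>
      intro _
      have hxz : H.Adj x.1 z.1 := hadj
      have hx := x.2
      have hz := z.2
      simp only [Set.mem_insert_iff, Set.mem_singleton_iff] at hx hz
      rcases hx with h1 | h1 <;> rcases hz with h2 | h2
      · exact absurd (h1.trans h2.symm) hxz.ne
      · rw [h1, h2] at hxz; exact hxz
      · rw [h1, h2] at hxz; exact hxz.symm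
      · exact absurd (h1.trans h2.symm) hxz.ne
  exact key p hne

lemma exists_third {A : Finset V} (h3 : 3 ≤ A.card) (a b : V) : ∃ c ∈ A, c ≠ a ∧ c ≠ b := by
  classical
  by_contra h
  push_neg at h
  have hsub : A ⊆ {a, b} := by
    intro c hc
    by_cases hca : c = a
    · simp [hca]
    · simp [h c hc hca]
  have := Finset.card_le_card hsub
  have h2 : ({a, b} : Finset V).card ≤ 2 := (Finset.card_insert_le _ _).trans (by simp)
  omega

lemma exists_small_CDS [Fintype V] (G' : SimpleGraph V) (hc : G'.Connected) (hlt : G'.cdn < 3) :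
    ∃ D : Finset V, D.card ≤ 2 ∧ G'.IsCDS ↑D := by
  have huniv : G'.IsCDS ↑(Finset.univ : Finset V) := by
    constructor
    · intro v; exact Or.inl (by simp)
    · rw [Finset.coe_univ]
      exact (SimpleGraph.induceUnivIso G').connected_iff.mpr hc
  have hne : {n | ∃ D : Finset V, D.card = n ∧ G'.IsCDS ↑D}.Nonempty :=
    ⟨_, Finset.univ, rfl, huniv⟩
  unfold SimpleGraph.cdn at hlt
  have hmem := Nat.sInf_mem hne
  obtain ⟨D, hcard, hCDS⟩ := hmem
  exact ⟨D, by omega, hCDS⟩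

lemma lemmaL [Fintype V] (G : SimpleGraph V) (h3 : G.cdn = 3)
    (hconn : G.Connected)
    (hcrit : ∀ u v : V, u ≠ v → ¬G.Adj u v → (G.addEdge u v).cdn < 3)
    {A : Finset V} (hA : G.IsIndepSet' ↑A) (hA3 : 3 ≤ A.card)
    {a b : V} (ha : a ∈ A) (hb : b ∈ A) (hab : a ≠ b) :
    ∃ p q w : V, ((p = a ∧ q = b) ∨ (p = b ∧ q = a)) ∧ w ∉ A ∧ w ≠ p ∧ w ≠ q ∧ p ≠ q ∧
      G.Adj p w ∧ ¬G.Adj w q ∧ ¬G.Adj p q ∧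
      (∀ v : V, v ≠ p → v ≠ w → v ≠ q → G.Adj p v ∨ G.Adj w v) := by
  classical
  have hnadj : ¬G.Adj a b := hA (Finset.mem_coe.mpr ha) (Finset.mem_coe.mpr hb) hab
  have hno2 : ∀ E : Finset V, E.card ≤ 2 → ¬ G.IsCDS ↑E := by
    intro E hE hCDS
    have hle : G.cdn ≤ E.card := Nat.sInf_le ⟨E, rfl, hCDS⟩
    omega
  set G' := G.addEdge a b with hG'
  have hG'conn : G'.Connected := hconn.mono le_sup_left
  obtain ⟨D, hDcard, hDdom, hDconn⟩ := exists_small_CDS G' hG'conn (hcrit a b hab hnadj)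
  obtain ⟨c, hc, hca, hcb⟩ := exists_third hA3 a b
  obtain ⟨⟨x0, hx0⟩⟩ := hDconn.nonempty
  have hx0' : x0 ∈ D := hx0
  have h12 : D.card = 1 ∨ D.card = 2 := by
    have := Finset.card_pos.mpr ⟨x0, hx0'⟩
    omega
  -- adjacency converter
  have conv : ∀ x y : V, x ≠ a → x ≠ b → G'.Adj x y → G.Adj x y := by
    intro x y hxa hxb h
    rcases (addEdge_adj G hab x y).mp h with h | (⟨h1, _⟩ | ⟨h1, _⟩)
    · exact h
    · exact absurd h1 hxa
    · exact absurd h1 hxb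
  rcases h12 with h1 | h2
  · -- card = 1
    obtain ⟨u, rfl⟩ := Finset.card_eq_one.mp h1
    have hdom : ∀ v : V, v ≠ u → G'.Adj u v := by
      intro v hv
      rcases hDdom v with h | ⟨d, hd, hadj⟩
      · exact absurd (by simpa using h) hv
      · have : d = u := by simpa using hd
        subst this; exact hadj
    by_cases hua : u = a
    · subst hua
      have := hdom c (fun h => hca h)
      rcases (addEdge_adj G hab u c).mp this with h | (⟨_, h1⟩ | ⟨h1, _⟩)
      · exact absurd h (hA (Finset.mem_coe.mpr ha) (Finset.mem_coe.mpr hc) (Ne.symm hca))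
      · exact absurd h1 hcb
      · exact absurd h1 hab
    by_cases hub : u = b
    · subst hub
      have := hdom c (fun h => hcb h)
      rcases (addEdge_adj G hab u c).mp this with h | (⟨h1, _⟩ | ⟨_, h1⟩)
      · exact absurd h (hA (Finset.mem_coe.mpr hb) (Finset.mem_coe.mpr hc) (Ne.symm hcb))
      · exact absurd h1 (Ne.symm hab)
      · exact absurd h1 hca
    · exfalso
      refine hno2 {u} (by simp) ⟨?_, ?_⟩
      · intro v
        by_cases hv : v = u
        · exact Or.inl (by simp [hv])
        · exact Or.inr ⟨u, by simp, conv u v hua hub (hdom v hv)⟩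
      · rw [Finset.coe_singleton]; exact connected_singleton G u
  · -- card = 2
    obtain ⟨u, w, huw, rfl⟩ := Finset.card_eq_two.mp h2
    have hsetcoe : (↑({u, w} : Finset V) : Set V) = ({u, w} : Set V) := by simp
    have hadjuw : G'.Adj u w := by
      apply adj_of_connected_pair G' huw
      rw [← hsetcoe]; exact hDconn
    have hdom2 : ∀ v : V, v ≠ u → v ≠ w → G'.Adj u v ∨ G'.Adj w v := by
      intro v hvu hvw
      rcases hDdom v with h | ⟨d, hd, hadj⟩
      · simp only [Finset.coe_insert, Finset.coe_singleton, Set.mem_insert_iff,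
          Set.mem_singleton_iff] at h
        rcases h with h | h
        · exact absurd h hvu
        · exact absurd h hvw
      · have : d = u ∨ d = w := by simpa using hd
        rcases this with rfl | rfl
        · exact Or.inl hadj
        · exact Or.inr hadj
    -- generic builder
    have build : ∀ p q w' : V, ((p = a ∧ q = b) ∨ (p = b ∧ q = a)) → w' ≠ a → w' ≠ b →
        G'.Adj p w' → (∀ v : V, v ≠ p → v ≠ w' → G'.Adj p v ∨ G'.Adj w' v) →
        ∃ p q w : V, ((p = a ∧ q = b) ∨ (p = b ∧ q = a)) ∧ w ∉ A ∧ w ≠ p ∧ w ≠ q ∧ p ≠ q ∧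
          G.Adj p w ∧ ¬G.Adj w q ∧ ¬G.Adj p q ∧
          (∀ v : V, v ≠ p → v ≠ w → v ≠ q → G.Adj p v ∨ G.Adj w v) := by
      intro p q w' hpq hw'a hw'b hadjp hdomp
      have hpA : p ∈ A := by rcases hpq with ⟨h, _⟩ | ⟨h, _⟩ <;> rw [h] <;> assumption
      have hqA : q ∈ A := by rcases hpq with ⟨_, h⟩ | ⟨_, h⟩ <;> rw [h] <;> assumption
      have hpqne : p ≠ q := by
        rcases hpq with ⟨h1, h2⟩ | ⟨h1, h2⟩
        · rw [h1, h2]; exact hab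
        · rw [h1, h2]; exact hab.symm
      have hq_or : q = a ∨ q = b := by
        rcases hpq with ⟨_, h⟩ | ⟨_, h⟩
        · exact Or.inr h
        · exact Or.inl h
      have hw'q : w' ≠ q := by
        intro hwq
        rcases hq_or with h | h
        · exact hw'a (hwq.trans h)
        · exact hw'b (hwq.trans h)
      have key_pv : ∀ v : V, v ≠ q → ¬((p = a ∧ v = b) ∨ (p = b ∧ v = a)) := by
        intro v hvq h
        rcases h with ⟨hpa, hvb⟩ | ⟨hpb, hva⟩ <;> rcases hpq with ⟨hpa', hqb⟩ | ⟨hpb', hqa⟩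
        · exact hvq (hvb.trans hqb.symm)
        · exact hab (hpa.symm.trans hpb')
        · exact hab (hpa'.symm.trans hpb)
        · exact hvq (hva.trans hqa.symm)
      have hGpw : G.Adj p w' := by
        rcases (addEdge_adj G hab p w').mp hadjp with h | (⟨_, h1⟩ | ⟨_, h1⟩)
        · exact h
        · exact absurd h1 hw'b
        · exact absurd h1 hw'a
      have hw'A : w' ∉ A := by
        intro hw'A
        exact hA (Finset.mem_coe.mpr hpA) (Finset.mem_coe.mpr hw'A) hGpw.ne hGpw
      have hnpq : ¬G.Adj p q := hA (Finset.mem_coe.mpr hpA) (Finset.mem_coe.mpr hqA) hpqne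
      have hdomG : ∀ v : V, v ≠ p → v ≠ w' → v ≠ q → G.Adj p v ∨ G.Adj w' v := by
        intro v hvp hvw hvq
        rcases hdomp v hvp hvw with h | h
        · left
          rcases (addEdge_adj G hab p v).mp h with h' | h'
          · exact h'
          · exact absurd h' (key_pv v hvq)
        · right; exact conv w' v hw'a hw'b h
      have hnw'q : ¬G.Adj w' q := by
        intro hwq
        refine hno2 {p, w'} ((Finset.card_insert_le _ _).trans (by simp)) ⟨?_, ?_⟩
        · intro v
          by_cases hvp : v = p
          · exact Or.inl (by simp [hvp])
          by_cases hvw : v = w'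
          · exact Or.inl (by simp [hvw])
          by_cases hvq : v = q
          · exact Or.inr ⟨w', by simp, hvq ▸ hwq⟩
          · rcases hdomG v hvp hvw hvq with h | h
            · exact Or.inr ⟨p, by simp, h⟩
            · exact Or.inr ⟨w', by simp, h⟩
        · rw [show (↑({p, w'} : Finset V) : Set V) = ({p, w'} : Set V) by simp]
          exact connected_pair_of_adj G hGpw
      exact ⟨p, q, w', hpq, hw'A, hGpw.ne', hw'q, hpqne, hGpw, hnw'q, hnpq, hdomG⟩
    -- helper: no vertex of {a,b} is G'-adjacent to c
    have hAc : ∀ d : V, d = a ∨ d = b → ¬ G'.Adj d c := by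
      intro d hd h
      have hdA : d ∈ A := by rcases hd with rfl | rfl <;> assumption
      have hdc : d ≠ c := by
        rcases hd with rfl | rfl
        · exact hca.symm
        · exact hcb.symm
      rcases (addEdge_adj G hab d c).mp h with h' | (⟨_, h1⟩ | ⟨_, h1⟩)
      · exact hA (Finset.mem_coe.mpr hdA) (Finset.mem_coe.mpr hc) hdc h'
      · exact hcb h1
      · exact hca h1
    by_cases haD : a = u ∨ a = w
    · by_cases hbD : b = u ∨ b = w
      · -- D = {a, b} : contradiction via c
        exfalso
        rcases haD with h1 | h1 <;> rcases hbD with h2 | h2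
        · exact hab (h1.trans h2.symm)
        · have hcu : c ≠ u := fun h => hca (h.trans h1.symm)
          have hcw : c ≠ w := fun h => hcb (h.trans h2.symm)
          rcases hdom2 c hcu hcw with h | h
          · exact hAc u (Or.inl h1.symm) h
          · exact hAc w (Or.inr h2.symm) h
        · have hcu : c ≠ u := fun h => hcb (h.trans h2.symm)
          have hcw : c ≠ w := fun h => hca (h.trans h1.symm)
          rcases hdom2 c hcu hcw with h | h
          · exact hAc u (Or.inr h2.symm) h
          · exact hAc w (Or.inl h1.symm) h
        · exact hab (h1.trans h2.symm)
      · push_neg at hbD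
        rcases haD with h1 | h1
        · refine build a b w (Or.inl ⟨rfl, rfl⟩) ?_ ?_ ?_ ?_
          · exact fun h => huw (h1.symm.trans h.symm)
          · exact Ne.symm hbD.2
          · rw [h1]; exact hadjuw
          · intro v hva hvw
            rw [h1]
            exact hdom2 v (by rw [← h1]; exact hva) hvw
        · refine build a b u (Or.inl ⟨rfl, rfl⟩) ?_ ?_ ?_ ?_
          · exact fun h => huw (h.trans h1)
          · exact Ne.symm hbD.1
          · rw [h1]; exact hadjuw.symm
          · intro v hva hvu
            rw [h1]
            exact (hdom2 v hvu (by rw [← h1]; exact hva)).symm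
    · push_neg at haD
      by_cases hbD : b = u ∨ b = w
      · rcases hbD with h2 | h2
        · refine build b a w (Or.inr ⟨rfl, rfl⟩) ?_ ?_ ?_ ?_
          · exact Ne.symm haD.2
          · exact fun h => huw (h.trans h2).symm
          · rw [h2]; exact hadjuw
          · intro v hvb hvw
            rw [h2]
            exact hdom2 v (by rw [← h2]; exact hvb) hvw
        · refine build b a u (Or.inr ⟨rfl, rfl⟩) ?_ ?_ ?_ ?_
          · exact Ne.symm haD.1
          · exact fun h => huw (h.trans h2)
          · rw [h2]; exact hadjuw.symm
          · intro v hvb hvu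
            rw [h2]
            exact (hdom2 v hvu (by rw [← h2]; exact hvb)).symm
      · push_neg at hbD
        exfalso
        refine hno2 {u, w} hDcard ⟨?_, ?_⟩
        · intro v
          by_cases hvu : v = u
          · exact Or.inl (by simp [hvu])
          by_cases hvw : v = w
          · exact Or.inl (by simp [hvw])
          rcases hdom2 v hvu hvw with h | h
          · exact Or.inr ⟨u, by simp, conv u v (Ne.symm haD.1) (Ne.symm hbD.1) h⟩
          · exact Or.inr ⟨w, by simp, conv w v (Ne.symm haD.2) (Ne.symm hbD.2) h⟩
        · rw [hsetcoe]
          exact connected_pair_of_adj G (conv u w (Ne.symm haD.1) (Ne.symm hbD.1) hadjuw)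

lemma cut_bound [Fintype V] (G : SimpleGraph V) (h3 : G.cdn = 3) (hconn : G.Connected)
    (hcrit : ∀ u v : V, u ≠ v → ¬G.Adj u v → (G.addEdge u v).cdn < 3)
    (A S : Finset V) (hA : G.IsIndepSet' ↑A)
    (hcut : ¬(G.induce ((↑S : Set V)ᶜ)).Connected) : A.card ≤ S.card + 2 := by
  classical
  by_cases hA3 : A.card ≤ 2
  · omega
  push_neg at hA3
  have hA3' : 3 ≤ A.card := hA3
  set T : Set V := (↑S : Set V)ᶜ with hT
  by_cases hTne : T.Nonempty
  swap
  · -- T empty : A ⊆ S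
    have hsub : A ⊆ S := by
      intro v hv
      by_contra hvS
      exact hTne ⟨v, by rw [hT]; exact fun h => hvS (Finset.mem_coe.mp h)⟩
    have := Finset.card_le_card hsub
    omega
  · have hTnonempty : Nonempty ↥T := hTne.to_subtype
    rw [SimpleGraph.connected_iff] at hcut
    have hnpre : ¬(G.induce T).Preconnected := fun h => hcut ⟨h, hTnonempty⟩
    rw [SimpleGraph.Preconnected] at hnpre
    push_neg at hnpre
    obtain ⟨x, y, hxy⟩ := hnpre
    set T1 : Set V := {v : V | ∃ h : v ∈ T, (G.induce T).Reachable x ⟨v, h⟩} with hT1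
    have hx1 : (x : V) ∈ T1 := ⟨x.2, Reachable.refl x⟩
    have hy1 : (y : V) ∉ T1 := by
      rintro ⟨h, r⟩
      apply hxy
      have he : (⟨(y : V), h⟩ : ↥T) = y := Subtype.ext rfl
      rwa [he] at r
    have hcross : ∀ u v : V, u ∈ T1 → v ∈ T → v ∉ T1 → ¬G.Adj u v := by
      rintro u v ⟨hu, r⟩ hv hv1 hadj
      exact hv1 ⟨hv, r.trans (SimpleGraph.Adj.reachable
        (show (G.induce T).Adj ⟨u, hu⟩ ⟨v, hv⟩ from hadj))⟩
    -- the set Q of "S-dominated" vertices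
    set Q : Finset V := A.filter (fun q => q ∈ T ∧ ∃ w : V, w ∈ S ∧ w ∉ A ∧ ¬G.Adj w q ∧
      ∀ c ∈ A, c ∈ T → c ≠ q → G.Adj w c) with hQ
    have hQcard : Q.card ≤ (S \ A).card := by
      have hQex : ∀ q ∈ Q, ∃ w : V, w ∈ S ∧ w ∉ A ∧ ¬G.Adj w q ∧
          ∀ c ∈ A, c ∈ T → c ≠ q → G.Adj w c := by
        intro q hq
        exact (Finset.mem_filter.mp hq).2.2
      choose! f hf1 hf2 hf3 hf4 using hQex
      apply Finset.card_le_card_of_injOn f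
      · intro q hq
        exact Finset.mem_sdiff.mpr ⟨hf1 q hq, hf2 q hq⟩
      · intro q1 h1 q2 h2 heq
        by_contra hne
        have hq1A : q1 ∈ A := (Finset.mem_filter.mp h1).1
        have hq1T : q1 ∈ T := (Finset.mem_filter.mp h1).2.1
        have := hf4 q2 h2 q1 hq1A hq1T hne
        rw [← heq] at this
        exact hf3 q1 h1 this
    -- at most two A∩T vertices outside Q
    have key2 : ∀ p q w : V, p ∈ A → q ∈ A → p ∈ T → q ∈ T → q ∉ Q → w ∉ A → w ≠ q →
        G.Adj p w → ¬G.Adj w q → ((p ∈ T1 ∧ q ∈ T1) ∨ (p ∉ T1 ∧ q ∉ T1)) →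
        (∀ v : V, v ≠ p → v ≠ w → v ≠ q → G.Adj p v ∨ G.Adj w v) → False := by
      intro p q w hpA hqA hpT hqT hqQ hwA hwq hpw hnwq hside hdom
      by_cases hwS : w ∈ S
      · apply hqQ
        refine Finset.mem_filter.mpr ⟨hqA, hqT, w, hwS, hwA, hnwq, ?_⟩
        intro c hcA hcT hcq
        by_cases hcp : c = p
        · rw [hcp]; exact hpw.symm
        by_cases hcw : c = w
        · exact absurd (hcw ▸ hcA) hwA
        rcases hdom c hcp hcw hcq with h | h
        · exact absurd h (hA (Finset.mem_coe.mpr hpA) (Finset.mem_coe.mpr hcA) (Ne.symm hcp))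
        · exact h
      · have hwT : w ∈ T := by rw [hT]; exact fun h => hwS (Finset.mem_coe.mp h)
        rcases hside with ⟨hp1, hq1⟩ | ⟨hp1, hq1⟩
        · have hw1 : w ∈ T1 := by
            by_contra hw1
            exact hcross p w hp1 hwT hw1 hpw
          have hvp : (y : V) ≠ p := fun h => hy1 (h ▸ hp1)
          have hvw : (y : V) ≠ w := fun h => hy1 (h ▸ hw1)
          have hvq : (y : V) ≠ q := fun h => hy1 (h ▸ hq1)
          rcases hdom y hvp hvw hvq with h | h
          · exact hcross p y hp1 y.2 hy1 h
          · exact hcross w y hw1 y.2 hy1 h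
        · have hw1 : w ∉ T1 := fun hw1 => hcross w p hw1 hpT hp1 hpw.symm
          have hvp : (x : V) ≠ p := fun h => hp1 (h ▸ hx1)
          have hvw : (x : V) ≠ w := fun h => hw1 (h ▸ hx1)
          have hvq : (x : V) ≠ q := fun h => hq1 (h ▸ hx1)
          rcases hdom x hvp hvw hvq with h | h
          · exact hcross x p hx1 hpT hp1 h.symm
          · exact hcross x w hx1 hwT hw1 h.symm
    have key : ∀ a b : V, a ∈ A → b ∈ A → a ∈ T → b ∈ T → a ∉ Q → b ∉ Q → a ≠ b →
        ((a ∈ T1 ∧ b ∈ T1) ∨ (a ∉ T1 ∧ b ∉ T1)) → False := by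
      intro a b haA hbA haT hbT haQ hbQ hab hside
      obtain ⟨p, q, w, hpq, hwA, hwp, hwq, hpqne, hpw, hnwq, hnpq, hdom⟩ :=
        lemmaL G h3 hconn hcrit hA hA3' haA hbA hab
      rcases hpq with ⟨h1, h2⟩ | ⟨h1, h2⟩
      · exact key2 p q w (by rw [h1]; exact haA) (by rw [h2]; exact hbA)
          (by rw [h1]; exact haT) (by rw [h2]; exact hbT) (by rw [h2]; exact hbQ)
          hwA hwq hpw hnwq
          (by rw [h1, h2]; exact hside) hdom
      · refine key2 p q w (by rw [h1]; exact hbA) (by rw [h2]; exact haA)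
          (by rw [h1]; exact hbT) (by rw [h2]; exact haT) (by rw [h2]; exact haQ)
          hwA hwq hpw hnwq ?_ hdom
        rcases hside with ⟨u1, u2⟩ | ⟨u1, u2⟩
        · exact Or.inl ⟨by rw [h1]; exact u2, by rw [h2]; exact u1⟩
        · exact Or.inr ⟨by rw [h1]; exact u2, by rw [h2]; exact u1⟩
    set AT : Finset V := A.filter (fun v => v ∈ T) with hAT
    have hAT2 : (AT \ Q).card ≤ 2 := by
      by_contra hcon
      push_neg at hcon
      obtain ⟨a, b, c, ha', hb', hc', hab, hac, hbc⟩ := Finset.two_lt_card_iff.mp hcon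
      obtain ⟨ha1, ha2⟩ := Finset.mem_sdiff.mp ha'
      obtain ⟨hb1, hb2⟩ := Finset.mem_sdiff.mp hb'
      obtain ⟨hc1, hc2⟩ := Finset.mem_sdiff.mp hc'
      obtain ⟨haA, haT⟩ := Finset.mem_filter.mp ha1
      obtain ⟨hbA, hbT⟩ := Finset.mem_filter.mp hb1
      obtain ⟨hcA, hcT⟩ := Finset.mem_filter.mp hc1
      by_cases h1 : a ∈ T1 <;> by_cases h2 : b ∈ T1 <;> by_cases h3' : c ∈ T1
      · exact key a b haA hbA haT hbT ha2 hb2 hab (Or.inl ⟨h1, h2⟩)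
      · exact key a b haA hbA haT hbT ha2 hb2 hab (Or.inl ⟨h1, h2⟩)
      · exact key a c haA hcA haT hcT ha2 hc2 hac (Or.inl ⟨h1, h3'⟩)
      · exact key b c hbA hcA hbT hcT hb2 hc2 hbc (Or.inr ⟨h2, h3'⟩)
      · exact key b c hbA hcA hbT hcT hb2 hc2 hbc (Or.inl ⟨h2, h3'⟩)
      · exact key a c haA hcA haT hcT ha2 hc2 hac (Or.inr ⟨h1, h3'⟩)
      · exact key a b haA hbA haT hbT ha2 hb2 hab (Or.inr ⟨h1, h2⟩)
      · exact key a b haA hbA haT hbT ha2 hb2 hab (Or.inr ⟨h1, h2⟩)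
    -- counting
    have hsplit : (A.filter (fun v => v ∈ T)).card + (A.filter (fun v => ¬ v ∈ T)).card
        = A.card := Finset.card_filter_add_card_filter_not _
    have hrest : A.filter (fun v => ¬ v ∈ T) ⊆ S ∩ A := by
      intro v hv
      obtain ⟨hvA, hvT⟩ := Finset.mem_filter.mp hv
      rw [hT, Set.mem_compl_iff, not_not] at hvT
      exact Finset.mem_inter.mpr ⟨Finset.mem_coe.mp hvT, hvA⟩
    have hrestcard := Finset.card_le_card hrest
    have hATcard : AT.card ≤ (AT \ Q).card + Q.card := by
      have : AT ⊆ (AT \ Q) ∪ Q := by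
        intro v hv
        by_cases hvQ : v ∈ Q
        · exact Finset.mem_union_right _ hvQ
        · exact Finset.mem_union_left _ (Finset.mem_sdiff.mpr ⟨hv, hvQ⟩)
      exact (Finset.card_le_card this).trans (Finset.card_union_le _ _)
    have hScard : (S \ A).card + (S ∩ A).card = S.card := Finset.card_sdiff_add_card_inter S A
    have hATeq : AT.card = (A.filter (fun v => v ∈ T)).card := by rw [hAT]
    omega

theorem stmt_4 {V : Type*} [Fintype V] (G : SimpleGraph V)
    (hG : G.IsCritical3) :
    G.indepNum' ≤ G.conn + 2 := by
  classical
  obtain ⟨hconn, h3, hcrit⟩ := hG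
  -- the universal vertex set is a vertex cut (its complement is empty)
  have hCne : {n | ∃ S : Finset V, S.card = n ∧ G.IsVertexCut S}.Nonempty := by
    refine ⟨(Finset.univ : Finset V).card, Finset.univ, rfl, ?_⟩
    intro h
    obtain ⟨⟨v, hv⟩⟩ := h.nonempty
    simp at hv
  have hconnmem := Nat.sInf_mem hCne
  obtain ⟨S0, hS0card, hS0cut⟩ := hconnmem
  have hbound : ∀ n ∈ {n | ∃ s : Finset V, G.IsIndepSet' ↑s ∧ s.card = n},
      n ≤ G.conn + 2 := by
    rintro n ⟨A, hAind, rfl⟩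
    have h1 : A.card ≤ S0.card + 2 := cut_bound G h3 hconn hcrit A S0 hAind hS0cut
    have h2 : S0.card = G.conn := hS0card
    omega
  have hne : {n | ∃ s : Finset V, G.IsIndepSet' ↑s ∧ s.card = n}.Nonempty := by
    refine ⟨0, ∅, ?_, by simp⟩
    simp [SimpleGraph.IsIndepSet']
  exact csSup_le hne hbound
end

section
/- Every graph G in the family 𝒢₁(b₀, b₁, ..., b_{s−1}) is 3-γc-critical, i.e., γc(G) = 3 and γc(G + uv) = 2 for every pair of non-adjacent vertices u, v. -/
open SimpleGraph Finset

variable {V : Type*}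

/-- One-sided description of the edges in the family `𝒢₁(b₀, …, b_{s-1})`.
`A i` (for `0 ≤ i ≤ s`) are the vertices `aᵢ`, `B j` (for `0 ≤ j ≤ s-1`) the sets `Bⱼ`,
`x` the special vertex, and `bb` the fixed vertex `b ∈ B₀`. -/
def G1Half {V : Type*} (s : ℕ) (A : ℕ → V) (B : ℕ → Finset V) (x bb : V) (p q : V) : Prop :=
  (p = A 0 ∧ (q = x ∨ ∃ j < s, q ∈ B j)) ∨
  (∃ i, 1 ≤ i ∧ i ≤ s - 1 ∧ p = A i ∧ (q = x ∨ ∃ j < s, j ≠ i ∧ q ∈ B j)) ∨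
  (p = A s ∧ ∃ j, 1 ≤ j ∧ j ≤ s - 1 ∧ q ∈ B j) ∨
  (p = x ∧ q ≠ bb ∧ q ≠ x ∧ q ≠ A s) ∨
  ((∃ j, 1 ≤ j ∧ j ≤ s - 1 ∧ p ∈ B j) ∧ (∃ k, 1 ≤ k ∧ k ≤ s - 1 ∧ q ∈ B k)) ∨
  (p ∈ B 0 ∧ q ∈ B 0)

/-- `G` is the graph in the family `𝒢₁(b₀, …, b_{s-1})` built from the given data. -/
def SimpleGraph.G1Witness {V : Type*} (G : SimpleGraph V)
    (s : ℕ) (A : ℕ → V) (B : ℕ → Finset V) (x bb : V) : Prop :=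
  2 ≤ s ∧
  (∀ i ≤ s, ∀ j ≤ s, A i = A j → i = j) ∧
  (∀ j < s, (B j).Nonempty) ∧
  (∀ i < s, ∀ j < s, i ≠ j → Disjoint (B i) (B j)) ∧
  (∀ i ≤ s, ∀ j < s, A i ∉ B j) ∧
  (∀ j < s, x ∉ B j) ∧ (∀ i ≤ s, x ≠ A i) ∧
  bb ∈ B 0 ∧
  (∀ z : V, (∃ i ≤ s, z = A i) ∨ (∃ j < s, z ∈ B j) ∨ z = x) ∧
  ∀ p q : V, G.Adj p q ↔ p ≠ q ∧ (G1Half s A B x bb p q ∨ G1Half s A B x bb q p)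

section Helpers
set_option linter.unusedSectionVars false
variable {V : Type*} [DecidableEq V]

lemma my_addEdge_comm (G : SimpleGraph V) (u v : V) : G.addEdge u v = G.addEdge v u := by
  unfold SimpleGraph.addEdge
  rw [Sym2.eq_swap]

lemma my_addEdge_adj (G : SimpleGraph V) (u v a b : V) :
    (G.addEdge u v).Adj a b ↔ G.Adj a b ∨ (a ≠ b ∧ ((a = u ∧ b = v) ∨ (a = v ∧ b = u))) := by
  simp only [SimpleGraph.addEdge, sup_adj, fromEdgeSet_adj, Set.mem_singleton_iff,
    Sym2.eq_iff]
  tauto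

lemma my_addEdge_left {G : SimpleGraph V} {a b : V} (h : G.Adj a b) (u v : V) :
    (G.addEdge u v).Adj a b := Or.inl h

lemma my_addEdge_new {G : SimpleGraph V} {u v : V} (h : u ≠ v) : (G.addEdge u v).Adj u v := by
  rw [my_addEdge_adj]; tauto

lemma adj_of_connected_pair_s12 (G : SimpleGraph V) {p q : V} (hpq : p ≠ q)
    (hc : (G.induce (↑({p, q} : Finset V) : Set V)).Connected) : G.Adj p q := by
  have hp : p ∈ (↑({p, q} : Finset V) : Set V) := by simp
  have hq : q ∈ (↑({p, q} : Finset V) : Set V) := by simp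
  obtain ⟨w⟩ := hc.preconnected ⟨p, hp⟩ ⟨q, hq⟩
  clear hc
  cases w with
  | nil => exact absurd rfl hpq
  | cons h w' =>
    rename_i b
    have hb := b.2
    simp only [Finset.coe_insert, Set.mem_insert_iff, Finset.coe_singleton,
      Set.mem_singleton_iff] at hb
    have h' : G.Adj p ↑b := h
    rcases hb with hb | hb
    · rw [hb] at h'; exact absurd h' G.irrefl
    · rwa [hb] at h'

lemma cds_pair (H : SimpleGraph V) {p q : V} (hpq : H.Adj p q)
    (hdom : ∀ z, z = p ∨ z = q ∨ H.Adj p z ∨ H.Adj q z) :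
    ∃ D : Finset V, D.card = 2 ∧ H.IsCDS ↑D := by
  have hne := hpq.ne
  refine ⟨{p, q}, ?_, ?_, ?_⟩
  · rw [Finset.card_insert_of_notMem (by simp [hne]), Finset.card_singleton]
  · intro z
    rcases hdom z with rfl | rfl | h | h
    · left; simp
    · left; simp
    · right; exact ⟨p, by simp, h⟩
    · right; exact ⟨q, by simp, h⟩
  · have hmem : ∀ z : V, z ∈ (↑({p, q} : Finset V) : Set V) ↔ z = p ∨ z = q := by
      intro z; simp
    haveI : Nonempty ↑(↑({p, q} : Finset V) : Set V) := ⟨⟨p, (hmem p).mpr (Or.inl rfl)⟩⟩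
    refine SimpleGraph.Connected.mk ?_
    intro a b
    have ha := (hmem _).mp a.2
    have hb := (hmem _).mp b.2
    have key : ∀ c d : ↑(↑({p, q} : Finset V) : Set V), (c : V) = p → (d : V) = q →
        (H.induce _).Adj c d := by
      intro c d hc hd
      show H.Adj ↑c ↑d
      rw [hc, hd]; exact hpq
    rcases ha with ha | ha <;> rcases hb with hb | hb
    · exact (Subtype.ext (ha.trans hb.symm) : a = b) ▸ Reachable.refl a
    · exact (key a b ha hb).reachable
    · exact ((key b a hb ha).reachable).symm
    · exact (Subtype.ext (ha.trans hb.symm) : a = b) ▸ Reachable.refl a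

lemma cds_triple (H : SimpleGraph V) {p q r : V} (hpq : H.Adj p q) (hpr : H.Adj p r)
    (hqr : H.Adj q r)
    (hdom : ∀ z, z = p ∨ z = q ∨ z = r ∨ H.Adj p z ∨ H.Adj q z ∨ H.Adj r z) :
    ∃ D : Finset V, D.card = 3 ∧ H.IsCDS ↑D := by
  refine ⟨{p, q, r}, ?_, ?_, ?_⟩
  · rw [Finset.card_insert_of_notMem (by simp [hpq.ne, hpr.ne]),
      Finset.card_insert_of_notMem (by simp [hqr.ne]), Finset.card_singleton]
  · intro z
    rcases hdom z with rfl | rfl | rfl | h | h | h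
    · left; simp
    · left; simp
    · left; simp
    · right; exact ⟨p, by simp, h⟩
    · right; exact ⟨q, by simp, h⟩
    · right; exact ⟨r, by simp, h⟩
  · have hmem : ∀ z : V, z ∈ (↑({p, q, r} : Finset V) : Set V) ↔ z = p ∨ z = q ∨ z = r := by
      intro z; simp
    have hP : p ∈ (↑({p, q, r} : Finset V) : Set V) := (hmem p).mpr (Or.inl rfl)
    haveI : Nonempty ↑(↑({p, q, r} : Finset V) : Set V) := ⟨⟨p, hP⟩⟩
    refine SimpleGraph.Connected.mk ?_
    have hreach : ∀ a : ↑(↑({p, q, r} : Finset V) : Set V),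
        (H.induce _).Reachable ⟨p, hP⟩ a := by
      intro a
      rcases (hmem _).mp a.2 with ha | ha | ha
      · exact (Subtype.ext ha.symm :
          (⟨p, hP⟩ : ↑(↑({p, q, r} : Finset V) : Set V)) = a) ▸ Reachable.refl _
      · refine Adj.reachable ?_
        show H.Adj p ↑a
        rw [ha]; exact hpq
      · refine Adj.reachable ?_
        show H.Adj p ↑a
        rw [ha]; exact hpr
    intro a b
    exact (hreach a).symm.trans (hreach b)

lemma cdn_eq [Fintype V] (H : SimpleGraph V) (n : ℕ)
    (hmem : ∃ D : Finset V, D.card = n ∧ H.IsCDS ↑D)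
    (hlb : ∀ D : Finset V, H.IsCDS ↑D → n ≤ D.card) : H.cdn = n := by
  have h1 : H.cdn ≤ n := Nat.sInf_le hmem
  have h2 : n ≤ H.cdn := by
    have hmem' : H.cdn ∈ {m | ∃ D : Finset V, D.card = m ∧ H.IsCDS ↑D} :=
      Nat.sInf_mem ⟨n, hmem⟩
    obtain ⟨D', hD', hc'⟩ := hmem'
    exact hD' ▸ hlb D' hc'
  omega

lemma not_cds_empty (H : SimpleGraph V) : ¬ H.IsCDS ↑(∅ : Finset V) := by
  intro h
  obtain ⟨⟨z, hz⟩⟩ := h.2.nonempty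
  simp at hz

end Helpers

theorem stmt_12 {V : Type*} [Fintype V] (G : SimpleGraph V)
    (s : ℕ) (A : ℕ → V) (B : ℕ → Finset V) (x bb : V)
    (h : G.G1Witness s A B x bb) :
    G.cdn = 3 ∧ ∀ u v : V, u ≠ v → ¬G.Adj u v → (G.addEdge u v).cdn = 2 := by
  classical
  obtain ⟨hs, hAinj, hBne, hBdisj, hAB, hxB, hxA, hbbB, hcov, hadjG⟩ := h
  have h0s : (0:ℕ) < s := by omega
  have h1s : (1:ℕ) < s := by omega
  -- distinctness facts
  have Ane : ∀ i, i ≤ s → ∀ j, j ≤ s → i ≠ j → A i ≠ A j :=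
    fun i hi j hj hij e => hij (hAinj i hi j hj e)
  have dAB : ∀ i, i ≤ s → ∀ j, j < s → ∀ c ∈ B j, A i ≠ c := by
    intro i hi j hj c hc e
    rw [← e] at hc
    exact hAB i hi j hj hc
  have dxB : ∀ j, j < s → ∀ c ∈ B j, x ≠ c := by
    intro j hj c hc e
    rw [← e] at hc
    exact hxB j hj hc
  have dBB : ∀ j, j < s → ∀ k, k < s → j ≠ k → ∀ c ∈ B j, ∀ d ∈ B k, c ≠ d := by
    intro j hj k hk hjk c hc d hd e
    rw [e] at hc
    exact Finset.disjoint_left.mp (hBdisj j hj k hk hjk) hc hd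
  -- positive adjacency lemmas
  have adjAx : ∀ i, i < s → G.Adj (A i) x := by
    intro i hi
    rw [hadjG]
    refine ⟨(hxA i hi.le).symm, Or.inl ?_⟩
    unfold G1Half
    rcases Nat.eq_zero_or_pos i with rfl | hpos
    · exact Or.inl ⟨rfl, Or.inl rfl⟩
    · exact Or.inr (Or.inl ⟨i, hpos, by omega, rfl, Or.inl rfl⟩)
  have adjAB : ∀ i, i < s → ∀ j, j < s → (i = 0 ∨ j ≠ i) → ∀ c ∈ B j, G.Adj (A i) c := by
    intro i hi j hj hcond c hc
    rw [hadjG]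
    refine ⟨dAB i hi.le j hj c hc, Or.inl ?_⟩
    unfold G1Half
    rcases hcond with rfl | hji
    · exact Or.inl ⟨rfl, Or.inr ⟨j, hj, hc⟩⟩
    · rcases Nat.eq_zero_or_pos i with rfl | hpos
      · exact Or.inl ⟨rfl, Or.inr ⟨j, hj, hc⟩⟩
      · exact Or.inr (Or.inl ⟨i, hpos, by omega, rfl, Or.inr ⟨j, hj, hji, hc⟩⟩)
  have adjAsB : ∀ k, 1 ≤ k → k < s → ∀ c ∈ B k, G.Adj (A s) c := by
    intro k hk1 hk c hc
    rw [hadjG]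
    refine ⟨dAB s le_rfl k hk c hc, Or.inl ?_⟩
    unfold G1Half
    exact Or.inr (Or.inr (Or.inl ⟨rfl, k, hk1, by omega, hc⟩))
  have adjxz : ∀ z : V, z ≠ bb → z ≠ x → z ≠ A s → G.Adj x z := by
    intro z h1 h2 h3
    rw [hadjG]
    exact ⟨fun e => h2 e.symm, Or.inl (Or.inr (Or.inr (Or.inr (Or.inl ⟨rfl, h1, h2, h3⟩))))⟩
  have adjB0 : ∀ c ∈ B 0, ∀ d ∈ B 0, c ≠ d → G.Adj c d := by
    intro c hc d hd hcd
    rw [hadjG]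
    refine ⟨hcd, Or.inl ?_⟩
    unfold G1Half
    exact Or.inr (Or.inr (Or.inr (Or.inr (Or.inr ⟨hc, hd⟩))))
  have adjBB : ∀ j, 1 ≤ j → j < s → ∀ k, 1 ≤ k → k < s →
      ∀ c ∈ B j, ∀ d ∈ B k, c ≠ d → G.Adj c d := by
    intro j hj1 hj k hk1 hk c hc d hd hcd
    rw [hadjG]
    refine ⟨hcd, Or.inl ?_⟩
    unfold G1Half
    exact Or.inr (Or.inr (Or.inr (Or.inr (Or.inl
      ⟨⟨j, hj1, by omega, hc⟩, ⟨k, hk1, by omega, hd⟩⟩))))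
  -- half analysis lemmas
  have halfA : ∀ i, i ≤ s → ∀ q : V, G1Half s A B x bb (A i) q →
      q = x ∨ ∃ j, j < s ∧ q ∈ B j := by
    intro i hi q hh
    unfold G1Half at hh
    rcases hh with ⟨_, hq⟩ | ⟨i', _, _, _, hq⟩ | ⟨_, j, hj1, hj2, hq⟩ |
      ⟨hp, _⟩ | ⟨⟨j, hj1, hj2, hp⟩, _⟩ | ⟨hp, _⟩
    · rcases hq with rfl | ⟨j, hj, hq⟩
      · exact Or.inl rfl
      · exact Or.inr ⟨j, hj, hq⟩
    · rcases hq with rfl | ⟨j, hj, _, hq⟩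
      · exact Or.inl rfl
      · exact Or.inr ⟨j, hj, hq⟩
    · exact Or.inr ⟨j, by omega, hq⟩
    · exact absurd hp.symm (hxA i hi)
    · exact absurd hp (hAB i hi j (by omega))
    · exact absurd hp (hAB i hi 0 h0s)
  have halfAmid : ∀ i, 1 ≤ i → i < s → ∀ q : V, G1Half s A B x bb (A i) q →
      q = x ∨ ∃ j, j < s ∧ j ≠ i ∧ q ∈ B j := by
    intro i hi1 hi q hh
    unfold G1Half at hh
    rcases hh with ⟨hp, _⟩ | ⟨i', hi'1, hi'2, hp, hq⟩ | ⟨hp, _, _, _, _⟩ |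
      ⟨hp, _⟩ | ⟨⟨j, hj1, hj2, hp⟩, _⟩ | ⟨hp, _⟩
    · have := hAinj i hi.le 0 (by omega) hp
      omega
    · have hii' := hAinj i hi.le i' (by omega) hp
      subst hii'
      rcases hq with rfl | ⟨j, hj, hji, hq⟩
      · exact Or.inl rfl
      · exact Or.inr ⟨j, hj, hji, hq⟩
    · have := hAinj i hi.le s le_rfl hp
      omega
    · exact absurd hp.symm (hxA i hi.le)
    · exact absurd hp (hAB i hi.le j (by omega))
    · exact absurd hp (hAB i hi.le 0 h0s)
  have halfAs : ∀ q : V, G1Half s A B x bb (A s) q →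
      ∃ j, 1 ≤ j ∧ j < s ∧ q ∈ B j := by
    intro q hh
    unfold G1Half at hh
    rcases hh with ⟨hp, _⟩ | ⟨i', hi'1, hi'2, hp, _⟩ | ⟨_, j, hj1, hj2, hq⟩ |
      ⟨hp, _⟩ | ⟨⟨j, hj1, hj2, hp⟩, _⟩ | ⟨hp, _⟩
    · have := hAinj s le_rfl 0 (by omega) hp
      omega
    · have := hAinj s le_rfl i' (by omega) hp
      omega
    · exact ⟨j, hj1, by omega, hq⟩
    · exact absurd hp.symm (hxA s le_rfl)
    · exact absurd hp (hAB s le_rfl j (by omega))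
    · exact absurd hp (hAB s le_rfl 0 h0s)
  have halfx : ∀ q : V, G1Half s A B x bb x q → q ≠ bb ∧ q ≠ A s := by
    intro q hh
    unfold G1Half at hh
    rcases hh with ⟨hp, _⟩ | ⟨i', hi'1, hi'2, hp, _⟩ | ⟨hp, _⟩ |
      ⟨_, hq1, _, hq3⟩ | ⟨⟨j, hj1, hj2, hp⟩, _⟩ | ⟨hp, _⟩
    · exact absurd hp (hxA 0 (by omega))
    · exact absurd hp (hxA i' (by omega))
    · exact absurd hp (hxA s le_rfl)
    · exact ⟨hq1, hq3⟩
    · exact absurd hp (hxB j (by omega))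
    · exact absurd hp (hxB 0 h0s)
  have halfB0 : ∀ p : V, p ∈ B 0 → ∀ q : V, G1Half s A B x bb p q → q ∈ B 0 := by
    intro p hpB q hh
    unfold G1Half at hh
    rcases hh with ⟨hp, _⟩ | ⟨i', hi'1, hi'2, hp, _⟩ | ⟨hp, _⟩ |
      ⟨hp, _⟩ | ⟨⟨j, hj1, hj2, hp⟩, _⟩ | ⟨_, hq⟩
    · rw [hp] at hpB; exact absurd hpB (hAB 0 (by omega) 0 h0s)
    · rw [hp] at hpB; exact absurd hpB (hAB i' (by omega) 0 h0s)
    · rw [hp] at hpB; exact absurd hpB (hAB s le_rfl 0 h0s)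
    · rw [hp] at hpB; exact absurd hpB (hxB 0 h0s)
    · exact absurd hpB (Finset.disjoint_left.mp (hBdisj j (by omega) 0 h0s (by omega)) hp)
    · exact hq
  have halfBk : ∀ k, 1 ≤ k → k < s → ∀ p ∈ B k, ∀ q : V, G1Half s A B x bb p q →
      ∃ j, 1 ≤ j ∧ j < s ∧ q ∈ B j := by
    intro k hk1 hk p hpB q hh
    unfold G1Half at hh
    rcases hh with ⟨hp, _⟩ | ⟨i', hi'1, hi'2, hp, _⟩ | ⟨hp, _⟩ |
      ⟨hp, _⟩ | ⟨_, ⟨j, hj1, hj2, hq⟩⟩ | ⟨hp, _⟩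
    · rw [hp] at hpB; exact absurd hpB (hAB 0 (by omega) k hk)
    · rw [hp] at hpB; exact absurd hpB (hAB i' (by omega) k hk)
    · rw [hp] at hpB; exact absurd hpB (hAB s le_rfl k hk)
    · rw [hp] at hpB; exact absurd hpB (hxB k hk)
    · exact ⟨j, hj1, by omega, hq⟩
    · exact absurd hpB (Finset.disjoint_left.mp (hBdisj 0 h0s k hk (by omega)) hp)
  -- non-adjacency lemmas
  have nadjAA : ∀ i, i ≤ s → ∀ j, j ≤ s → ¬ G.Adj (A i) (A j) := by
    intro i hi j hj had
    rw [hadjG] at had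
    rcases had.2 with hh | hh
    · rcases halfA i hi _ hh with e | ⟨l, hl, hc⟩
      · exact hxA j hj e.symm
      · exact hAB j hj l hl hc
    · rcases halfA j hj _ hh with e | ⟨l, hl, hc⟩
      · exact hxA i hi e.symm
      · exact hAB i hi l hl hc
  have nadjxAs : ¬ G.Adj x (A s) := by
    intro had
    rw [hadjG] at had
    rcases had.2 with hh | hh
    · exact (halfx _ hh).2 rfl
    · obtain ⟨j, _, hj, hc⟩ := halfAs _ hh
      exact hxB j hj hc
  have nadjxbb : ¬ G.Adj x bb := by
    intro had
    rw [hadjG] at had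
    rcases had.2 with hh | hh
    · exact (halfx _ hh).1 rfl
    · exact hxB 0 h0s (halfB0 _ hbbB _ hh)
  have nadjAsB0 : ∀ c ∈ B 0, ¬ G.Adj (A s) c := by
    intro c hc had
    rw [hadjG] at had
    rcases had.2 with hh | hh
    · obtain ⟨j, hj1, hj, hcj⟩ := halfAs _ hh
      exact Finset.disjoint_left.mp (hBdisj 0 h0s j hj (by omega)) hc hcj
    · exact hAB s le_rfl 0 h0s (halfB0 _ hc _ hh)
  have nadjABi : ∀ i, 1 ≤ i → i < s → ∀ c ∈ B i, ¬ G.Adj (A i) c := by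
    intro i hi1 hi c hc had
    rw [hadjG] at had
    rcases had.2 with hh | hh
    · rcases halfAmid i hi1 hi _ hh with e | ⟨j, hj, hji, hcj⟩
      · exact hxB i hi (e ▸ hc)
      · exact Finset.disjoint_left.mp (hBdisj i hi j hj (fun e => hji e.symm)) hc hcj
    · obtain ⟨j, hj1, hj, hcj⟩ := halfBk i hi1 hi c hc _ hh
      exact hAB i hi.le j hj hcj
  have nadjB0Bk : ∀ c ∈ B 0, ∀ k, 1 ≤ k → k < s → ∀ d ∈ B k, ¬ G.Adj c d := by
    intro c hc k hk1 hk d hd had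
    rw [hadjG] at had
    rcases had.2 with hh | hh
    · have := halfB0 c hc _ hh
      exact Finset.disjoint_left.mp (hBdisj k hk 0 h0s (by omega)) hd this
    · obtain ⟨j, hj1, hj, hcj⟩ := halfBk k hk1 hk d hd _ hh
      exact Finset.disjoint_left.mp (hBdisj 0 h0s j hj (by omega)) hc hcj
  -- closed neighborhood characterizations
  have nbAs : ∀ w : V, G.Adj w (A s) → ∃ k, 1 ≤ k ∧ k < s ∧ w ∈ B k := by
    intro w had
    rcases hcov w with ⟨i, hi, rfl⟩ | ⟨j, hj, hw⟩ | rfl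
    · exact absurd had (nadjAA i hi s le_rfl)
    · rcases Nat.eq_zero_or_pos j with rfl | hj1
      · exact absurd had.symm (nadjAsB0 w hw)
      · exact ⟨j, hj1, hj, hw⟩
    · exact absurd had nadjxAs
  have nbbb : ∀ w : V, G.Adj w bb → w ∈ B 0 ∨ ∃ i, i < s ∧ w = A i := by
    intro w had
    rcases hcov w with ⟨i, hi, rfl⟩ | ⟨j, hj, hw⟩ | rfl
    · rcases Nat.lt_or_ge i s with hi' | hi'
      · exact Or.inr ⟨i, hi', rfl⟩
      · have : i = s := by omega
        subst this
        exact absurd had (nadjAsB0 bb hbbB)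
    · rcases Nat.eq_zero_or_pos j with rfl | hj1
      · exact Or.inl hw
      · exact absurd had.symm (nadjB0Bk bb hbbB j hj1 hj w hw)
    · exact absurd had nadjxbb
  -- two distinct non-neighbours for every vertex
  have two_nonnbrs : ∀ w : V, ∃ z1 z2 : V, z1 ≠ z2 ∧ z1 ≠ w ∧ z2 ≠ w ∧
      ¬ G.Adj w z1 ∧ ¬ G.Adj w z2 := by
    intro w
    obtain ⟨c1, hc1⟩ := hBne 1 h1s
    rcases hcov w with ⟨i, hi, rfl⟩ | ⟨j, hj, hw⟩ | rfl
    · by_cases h0 : i = 0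
      · subst h0
        exact ⟨A 1, A 2, Ane 1 (by omega) 2 hs (by omega), Ane 1 (by omega) 0 (by omega)
          (by omega), Ane 2 hs 0 (by omega) (by omega),
          nadjAA 0 (by omega) 1 (by omega), nadjAA 0 (by omega) 2 hs⟩
      · by_cases h2 : i = 2
        · subst h2
          exact ⟨A 0, A 1, Ane 0 (by omega) 1 (by omega) (by omega),
            Ane 0 (by omega) 2 hs (by omega), Ane 1 (by omega) 2 hs (by omega),
            nadjAA 2 hs 0 (by omega), nadjAA 2 hs 1 (by omega)⟩
        · exact ⟨A 0, A 2, Ane 0 (by omega) 2 hs (by omega),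
            Ane 0 (by omega) i hi (fun e => h0 e.symm),
            Ane 2 hs i hi (fun e => h2 e.symm),
            nadjAA i hi 0 (by omega), nadjAA i hi 2 hs⟩
    · rcases Nat.eq_zero_or_pos j with rfl | hj1
      · refine ⟨A s, c1, dAB s le_rfl 1 h1s c1 hc1, ?_, ?_, ?_, ?_⟩
        · exact fun e => hAB s le_rfl 0 h0s (e ▸ hw)
        · exact (dBB 0 h0s 1 h1s (by omega) w hw c1 hc1).symm
        · exact fun ha => nadjAsB0 w hw ha.symm
        · exact nadjB0Bk w hw 1 (by omega) h1s c1 hc1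
      · refine ⟨A j, bb, dAB j hj.le 0 h0s bb hbbB, ?_, ?_, ?_, ?_⟩
        · exact fun e => hAB j hj.le j hj (e ▸ hw)
        · exact dBB 0 h0s j hj (by omega) bb hbbB w hw
        · exact fun ha => nadjABi j hj1 hj w hw ha.symm
        · exact fun ha => nadjB0Bk bb hbbB j hj1 hj w hw ha.symm
    · refine ⟨bb, A s, (dAB s le_rfl 0 h0s bb hbbB).symm, (dxB 0 h0s bb hbbB).symm,
        (hxA s le_rfl).symm, nadjxbb, nadjxAs⟩
  -- Part 1 : cdn G = 3
  obtain ⟨c1, hc1⟩ := hBne 1 h1s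
  have hc1x : c1 ≠ x := (dxB 1 h1s c1 hc1).symm
  have hc1bb : c1 ≠ bb := (dBB 1 h1s 0 h0s (by omega) c1 hc1 bb hbbB)
  have hc1As : c1 ≠ A s := (dAB s le_rfl 1 h1s c1 hc1).symm
  have upper3 : ∃ D : Finset V, D.card = 3 ∧ G.IsCDS ↑D := by
    refine cds_triple G (adjAx 0 h0s) (adjAB 0 h0s 1 h1s (Or.inl rfl) c1 hc1)
      (adjxz c1 hc1bb hc1x hc1As) ?_
    · intro z
      rcases hcov z with ⟨m, hm, rfl⟩ | ⟨l, hl, hz⟩ | rfl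
      · rcases Nat.lt_or_ge m s with hm' | hm'
        · exact Or.inr (Or.inr (Or.inr (Or.inr (Or.inl (adjAx m hm').symm))))
        · have : m = s := by omega
          subst this
          exact Or.inr (Or.inr (Or.inr (Or.inr (Or.inr (adjAsB 1 (by omega) h1s c1 hc1).symm))))
      · exact Or.inr (Or.inr (Or.inr (Or.inl (adjAB 0 h0s l hl (Or.inl rfl) z hz))))
      · exact Or.inr (Or.inl rfl)
  have lb3 : ∀ D : Finset V, G.IsCDS ↑D → 3 ≤ D.card := by
    intro D hcds
    by_contra hlt
    push_neg at hlt
    have h012 : D.card = 0 ∨ D.card = 1 ∨ D.card = 2 := by omega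
    rcases h012 with hcd | hcd | hcd
    · rw [Finset.card_eq_zero.mp hcd] at hcds
      exact not_cds_empty G hcds
    · obtain ⟨w, rfl⟩ := Finset.card_eq_one.mp hcd
      obtain ⟨z1, z2, hz12, hz1w, hz2w, hn1, hn2⟩ := two_nonnbrs w
      rcases hcds.1 z1 with hz | ⟨u', hu', ha⟩
      · simp only [Finset.coe_singleton, Set.mem_singleton_iff] at hz
        exact hz1w hz
      · simp only [Finset.coe_singleton, Set.mem_singleton_iff] at hu'
        subst hu'
        exact hn1 ha
    · obtain ⟨p, q, hpq, rfl⟩ := Finset.card_eq_two.mp hcd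
      have hadjpq : G.Adj p q := adj_of_connected_pair_s12 G hpq hcds.2
      have hdom : ∀ z : V, z = p ∨ z = q ∨ G.Adj p z ∨ G.Adj q z := by
        intro z
        rcases hcds.1 z with hz | ⟨u', hu', ha⟩
        · simp only [Finset.coe_insert, Set.mem_insert_iff, Finset.coe_singleton,
            Set.mem_singleton_iff] at hz
          tauto
        · simp only [Finset.coe_insert, Set.mem_insert_iff, Finset.coe_singleton,
            Set.mem_singleton_iff] at hu'
          rcases hu' with rfl | rfl
          · exact Or.inr (Or.inr (Or.inl ha))
          · exact Or.inr (Or.inr (Or.inr ha))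
      have notPQ : ∀ w : V, (w = A s ∨ ∃ k, 1 ≤ k ∧ k < s ∧ w ∈ B k) →
          (w ∈ B 0 ∨ ∃ i, i < s ∧ w = A i) → False := by
        intro w hP hQ
        rcases hP with rfl | ⟨k, hk1, hk, hwB⟩
        · rcases hQ with hw0 | ⟨i, hi, he⟩
          · exact hAB s le_rfl 0 h0s hw0
          · have := hAinj s le_rfl i hi.le he
            omega
        · rcases hQ with hw0 | ⟨i, hi, he⟩
          · exact Finset.disjoint_left.mp (hBdisj k hk 0 h0s (by omega)) hwB hw0
          · rw [he] at hwB
            exact hAB i hi.le k hk hwB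
      have key : ∀ p' q' : V, G.Adj p' q' →
          (p' = A s ∨ ∃ k, 1 ≤ k ∧ k < s ∧ p' ∈ B k) →
          (q' ∈ B 0 ∨ ∃ i, i < s ∧ q' = A i) →
          (∀ z : V, z = p' ∨ z = q' ∨ G.Adj p' z ∨ G.Adj q' z) → False := by
        intro p' q' hpq' hP hQ hdom'
        rcases hP with rfl | ⟨k, hk1, hk, hpB⟩
        · rcases hQ with hq0 | ⟨i, hi, rfl⟩
          · exact nadjAsB0 q' hq0 hpq'
          · exact nadjAA s le_rfl i hi.le hpq'
        · rcases hQ with hq0 | ⟨i, hi, rfl⟩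
          · exact nadjB0Bk q' hq0 k hk1 hk p' hpB hpq'.symm
          · by_cases hik : i = k
            · subst hik
              exact nadjABi i hk1 hk p' hpB hpq'.symm
            · rcases hdom' (A k) with he | he | ha | ha
              · exact hAB k hk.le k hk (he ▸ hpB)
              · exact hik (hAinj i hi.le k hk.le he.symm)
              · exact nadjABi k hk1 hk p' hpB ha.symm
              · exact nadjAA i hi.le k hk.le ha
      have hP : (p = A s ∨ ∃ k, 1 ≤ k ∧ k < s ∧ p ∈ B k) ∨
          (q = A s ∨ ∃ k, 1 ≤ k ∧ k < s ∧ q ∈ B k) := by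
        rcases hdom (A s) with he | he | ha | ha
        · exact Or.inl (Or.inl he.symm)
        · exact Or.inr (Or.inl he.symm)
        · exact Or.inl (Or.inr (nbAs p ha))
        · exact Or.inr (Or.inr (nbAs q ha))
      have hQ : (p ∈ B 0 ∨ ∃ i, i < s ∧ p = A i) ∨
          (q ∈ B 0 ∨ ∃ i, i < s ∧ q = A i) := by
        rcases hdom bb with he | he | ha | ha
        · exact Or.inl (Or.inl (he ▸ hbbB))
        · exact Or.inr (Or.inl (he ▸ hbbB))
        · exact Or.inl (nbbb p ha)
        · exact Or.inr (nbbb q ha)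
      rcases hP with hPp | hPq
      · rcases hQ with hQp | hQq
        · exact notPQ p hPp hQp
        · exact key p q hadjpq hPp hQq hdom
      · rcases hQ with hQp | hQq
        · have hdom' : ∀ z : V, z = q ∨ z = p ∨ G.Adj q z ∨ G.Adj p z := by
            intro z; rcases hdom z with h1 | h1 | h1 | h1 <;> tauto
          exact key q p hadjpq.symm hPq hQp hdom'
        · exact notPQ q hPq hQq
  have part1 : G.cdn = 3 := cdn_eq G 3 upper3 lb3
  -- Part 2 : lower bound for G + uv
  have lb2 : ∀ u v : V, u ≠ v → ∀ D : Finset V, (G.addEdge u v).IsCDS ↑D → 2 ≤ D.card := by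
    intro u v huv D hcds
    by_contra hlt
    push_neg at hlt
    have h01 : D.card = 0 ∨ D.card = 1 := by omega
    rcases h01 with hcd | hcd
    · rw [Finset.card_eq_zero.mp hcd] at hcds
      exact not_cds_empty _ hcds
    · obtain ⟨w, rfl⟩ := Finset.card_eq_one.mp hcd
      obtain ⟨z1, z2, hz12, hz1w, hz2w, hn1, hn2⟩ := two_nonnbrs w
      have hget : ∀ z : V, z ≠ w → ¬ G.Adj w z → (w = u ∧ z = v) ∨ (w = v ∧ z = u) := by
        intro z hzw hnz
        rcases hcds.1 z with hz | ⟨u', hu', ha⟩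
        · simp only [Finset.coe_singleton, Set.mem_singleton_iff] at hz
          exact absurd hz hzw
        · simp only [Finset.coe_singleton, Set.mem_singleton_iff] at hu'
          subst hu'
          rw [my_addEdge_adj] at ha
          rcases ha with ha | ⟨_, ha⟩
          · exact absurd ha hnz
          · exact ha
      rcases hget z1 hz1w hn1 with ⟨hw1, hz1⟩ | ⟨hw1, hz1⟩ <;>
        rcases hget z2 hz2w hn2 with ⟨hw2, hz2⟩ | ⟨hw2, hz2⟩
      · exact hz12 (hz1.trans hz2.symm)
      · exact huv (hw1.symm.trans hw2)
      · exact huv (hw2.symm.trans hw1)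
      · exact hz12 (hz1.trans hz2.symm)
  -- Part 2 : constructions of 2-element CDS in G + uv
  have WAA : ∀ i j : ℕ, i < s → j < s → 1 ≤ j → i ≠ j →
      ∃ D : Finset V, D.card = 2 ∧ (G.addEdge (A i) (A j)).IsCDS ↑D := by
    intro i j hi hj hj1 hij
    obtain ⟨c, hc⟩ := hBne j hj
    refine cds_pair _ (my_addEdge_left (adjAB i hi j hj (Or.inr (Ne.symm hij)) c hc) _ _) ?_
    intro z
    rcases hcov z with ⟨m, hm, rfl⟩ | ⟨l, hl, hz⟩ | rfl
    · by_cases hmi : m = i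
      · exact Or.inl (by rw [hmi])
      by_cases hmj : m = j
      · subst hmj
        exact Or.inr (Or.inr (Or.inl (my_addEdge_new (Ane i hi.le m hm hij))))
      by_cases hms : m = s
      · subst hms
        exact Or.inr (Or.inr (Or.inr (my_addEdge_left (adjAsB j hj1 hj c hc).symm _ _)))
      · have hms' : m < s := lt_of_le_of_ne hm hms
        exact Or.inr (Or.inr (Or.inr (my_addEdge_left
          (adjAB m hms' j hj (Or.inr (fun e => hmj e.symm)) c hc).symm _ _)))
    · by_cases hlj : l = j
      · subst hlj
        by_cases hzc : z = c
        · exact Or.inr (Or.inl hzc)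
        · exact Or.inr (Or.inr (Or.inr (my_addEdge_left
            (adjBB l hj1 hj l hj1 hj c hc z hz (fun e => hzc e.symm)) _ _)))
      · by_cases hli : l = i
        · subst hli
          by_cases hi0 : l = 0
          · exact Or.inr (Or.inr (Or.inl (my_addEdge_left
              (adjAB l hi l hl (Or.inl hi0) z hz) _ _)))
          · have h1i : 1 ≤ l := Nat.one_le_iff_ne_zero.mpr hi0
            exact Or.inr (Or.inr (Or.inr (my_addEdge_left
              (adjBB j hj1 hj l h1i hl c hc z hz
                (dBB j hj l hl (Ne.symm hij) c hc z hz)) _ _)))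
        · exact Or.inr (Or.inr (Or.inl (my_addEdge_left
            (adjAB i hi l hl (Or.inr hli) z hz) _ _)))
    · exact Or.inr (Or.inr (Or.inl (my_addEdge_left (adjAx i hi) _ _)))
  have WAs : ∀ i : ℕ, i < s →
      ∃ D : Finset V, D.card = 2 ∧ (G.addEdge (A i) (A s)).IsCDS ↑D := by
    intro i hi
    refine cds_pair _ (my_addEdge_left (adjAx i hi) _ _) ?_
    intro z
    rcases hcov z with ⟨m, hm, rfl⟩ | ⟨l, hl, hz⟩ | rfl
    · by_cases hmi : m = i
      · exact Or.inl (by rw [hmi])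
      by_cases hms : m = s
      · subst hms
        exact Or.inr (Or.inr (Or.inl (my_addEdge_new (Ane i hi.le m hm (by omega)))))
      · have hms' : m < s := lt_of_le_of_ne hm hms
        exact Or.inr (Or.inr (Or.inr (my_addEdge_left (adjAx m hms').symm _ _)))
    · by_cases hcond : i = 0 ∨ l ≠ i
      · exact Or.inr (Or.inr (Or.inl (my_addEdge_left (adjAB i hi l hl hcond z hz) _ _)))
      · push_neg at hcond
        obtain ⟨hi0, rfl⟩ := hcond
        have h1i : 1 ≤ l := Nat.one_le_iff_ne_zero.mpr hi0
        refine Or.inr (Or.inr (Or.inr (my_addEdge_left (adjxz z ?_ ?_ ?_) _ _)))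
        · exact dBB l hl 0 h0s (by omega) z hz bb hbbB
        · exact (dxB l hl z hz).symm
        · exact (dAB s le_rfl l hl z hz).symm
    · exact Or.inr (Or.inl rfl)
  have WAB : ∀ i : ℕ, 1 ≤ i → i < s → ∀ b ∈ B i,
      ∃ D : Finset V, D.card = 2 ∧ (G.addEdge (A i) b).IsCDS ↑D := by
    intro i hi1 hi b hb
    refine cds_pair _ (my_addEdge_new (dAB i hi.le i hi b hb)) ?_
    intro z
    rcases hcov z with ⟨m, hm, rfl⟩ | ⟨l, hl, hz⟩ | rfl
    · by_cases hmi : m = i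
      · exact Or.inl (by rw [hmi])
      by_cases hms : m = s
      · subst hms
        exact Or.inr (Or.inr (Or.inr (my_addEdge_left (adjAsB i hi1 hi b hb).symm _ _)))
      · have hms' : m < s := lt_of_le_of_ne hm hms
        exact Or.inr (Or.inr (Or.inr (my_addEdge_left
          (adjAB m hms' i hi (Or.inr (fun e => hmi e.symm)) b hb).symm _ _)))
    · by_cases hli : l = i
      · subst hli
        by_cases hzb : z = b
        · exact Or.inr (Or.inl hzb)
        · exact Or.inr (Or.inr (Or.inr (my_addEdge_left
            (adjBB l hi1 hi l hi1 hi b hb z hz (fun e => hzb e.symm)) _ _)))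
      · exact Or.inr (Or.inr (Or.inl (my_addEdge_left
          (adjAB i hi l hl (Or.inr hli) z hz) _ _)))
    · exact Or.inr (Or.inr (Or.inl (my_addEdge_left (adjAx i hi) _ _)))
  have WAsB0 : ∀ b ∈ B 0,
      ∃ D : Finset V, D.card = 2 ∧ (G.addEdge (A s) b).IsCDS ↑D := by
    intro b hb
    have hA0b : G.Adj (A 0) b := adjAB 0 h0s 0 h0s (Or.inl rfl) b hb
    refine cds_pair (G.addEdge (A s) b) (p := A 0) (q := b) (my_addEdge_left hA0b _ _) ?_
    intro z
    rcases hcov z with ⟨m, hm, rfl⟩ | ⟨l, hl, hz⟩ | rfl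
    · by_cases hm0 : m = 0
      · exact Or.inl (by rw [hm0])
      by_cases hms : m = s
      · subst hms
        exact Or.inr (Or.inr (Or.inr (my_addEdge_new (dAB m le_rfl 0 h0s b hb)).symm))
      · have hms' : m < s := lt_of_le_of_ne hm hms
        exact Or.inr (Or.inr (Or.inr (my_addEdge_left
          (adjAB m hms' 0 h0s (Or.inr (fun e => hm0 e.symm)) b hb).symm _ _)))
    · exact Or.inr (Or.inr (Or.inl (my_addEdge_left
        (adjAB 0 h0s l hl (Or.inl rfl) z hz) _ _)))
    · exact Or.inr (Or.inr (Or.inl (my_addEdge_left (adjAx 0 h0s) _ _)))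
  have Wd : ∃ D : Finset V, D.card = 2 ∧ (G.addEdge (A s) x).IsCDS ↑D := by
    refine cds_pair (G.addEdge (A s) x) (p := A 0) (q := x)
      (my_addEdge_left (adjAx 0 h0s) _ _) ?_
    intro z
    rcases hcov z with ⟨m, hm, rfl⟩ | ⟨l, hl, hz⟩ | rfl
    · by_cases hm0 : m = 0
      · exact Or.inl (by rw [hm0])
      by_cases hms : m = s
      · subst hms
        exact Or.inr (Or.inr (Or.inr (my_addEdge_new (hxA m le_rfl).symm).symm))
      · have hms' : m < s := lt_of_le_of_ne hm hms
        exact Or.inr (Or.inr (Or.inr (my_addEdge_left (adjAx m hms').symm _ _)))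
    · exact Or.inr (Or.inr (Or.inl (my_addEdge_left
        (adjAB 0 h0s l hl (Or.inl rfl) z hz) _ _)))
    · exact Or.inr (Or.inl rfl)
  have We : ∃ D : Finset V, D.card = 2 ∧ (G.addEdge x bb).IsCDS ↑D := by
    refine cds_pair (G.addEdge x bb) (p := x) (q := c1)
      (my_addEdge_left (adjxz c1 hc1bb hc1x hc1As) _ _) ?_
    intro z
    rcases hcov z with ⟨m, hm, rfl⟩ | ⟨l, hl, hz⟩ | rfl
    · by_cases hms : m = s
      · subst hms
        exact Or.inr (Or.inr (Or.inr (my_addEdge_left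
          (adjAsB 1 (by omega) h1s c1 hc1).symm _ _)))
      · have hms' : m < s := lt_of_le_of_ne hm hms
        exact Or.inr (Or.inr (Or.inl (my_addEdge_left (adjAx m hms').symm _ _)))
    · by_cases hzbb : z = bb
      · subst hzbb
        exact Or.inr (Or.inr (Or.inl (my_addEdge_new (dxB 0 h0s z hbbB))))
      · refine Or.inr (Or.inr (Or.inl (my_addEdge_left (adjxz z hzbb
          (dxB l hl z hz).symm (dAB s le_rfl l hl z hz).symm) _ _)))
    · exact Or.inl rfl
  have Wf : ∀ b ∈ B 0, ∀ k, 1 ≤ k → k < s → ∀ b' ∈ B k,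
      ∃ D : Finset V, D.card = 2 ∧ (G.addEdge b b').IsCDS ↑D := by
    intro b hb k hk1 hk b' hb'
    refine cds_pair _ (my_addEdge_new (dBB 0 h0s k hk (by omega) b hb b' hb')) ?_
    intro z
    rcases hcov z with ⟨m, hm, rfl⟩ | ⟨l, hl, hz⟩ | rfl
    · by_cases hms : m = s
      · subst hms
        exact Or.inr (Or.inr (Or.inr (my_addEdge_left (adjAsB k hk1 hk b' hb').symm _ _)))
      · have hms' : m < s := lt_of_le_of_ne hm hms
        have hcond : m = 0 ∨ (0:ℕ) ≠ m := by omega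
        exact Or.inr (Or.inr (Or.inl (my_addEdge_left
          (adjAB m hms' 0 h0s hcond b hb).symm _ _)))
    · rcases Nat.eq_zero_or_pos l with rfl | hl1
      · by_cases hzb : z = b
        · exact Or.inl hzb
        · exact Or.inr (Or.inr (Or.inl (my_addEdge_left
            (adjB0 b hb z hz (fun e => hzb e.symm)) _ _)))
      · by_cases hzb : z = b'
        · exact Or.inr (Or.inl hzb)
        · exact Or.inr (Or.inr (Or.inr (my_addEdge_left
            (adjBB k hk1 hk l hl1 hl b' hb' z hz (fun e => hzb e.symm)) _ _)))
    · refine Or.inr (Or.inr (Or.inr (my_addEdge_left (adjxz b'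
        (dBB k hk 0 h0s (by omega) b' hb' bb hbbB)
        (dxB k hk b' hb').symm (dAB s le_rfl k hk b' hb').symm).symm _ _)))
  -- assembling the upper bound for G + uv via a case analysis
  have aux : ∀ u v : V, u ≠ v → ¬ G.Adj u v →
      ((∃ i, i ≤ s ∧ u = A i) ∨ (u = x ∧ ∃ j, j < s ∧ v ∈ B j) ∨
        ((∃ j, j < s ∧ u ∈ B j) ∧ (∃ k, k < s ∧ v ∈ B k))) →
      ∃ D : Finset V, D.card = 2 ∧ (G.addEdge u v).IsCDS ↑D := by
    intro u v huv hnadj hcase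
    rcases hcase with ⟨i, hi, rfl⟩ | ⟨rfl, j, hj, hvB⟩ | ⟨⟨j, hj, huB⟩, ⟨k, hk, hvB⟩⟩
    · -- u = A i
      rcases hcov v with ⟨j, hj, rfl⟩ | ⟨l, hl, hvB⟩ | rfl
      · -- v = A j
        have hij : i ≠ j := fun e => huv (e ▸ rfl)
        by_cases his : i = s
        · have hj' : j < s := lt_of_le_of_ne hj (fun e => hij (his.trans e.symm))
          rw [his, my_addEdge_comm]
          exact WAs j hj'
        · have hi' : i < s := lt_of_le_of_ne hi his
          by_cases hjs : j = s
          · subst hjs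
            exact WAs i hi'
          · have hj' : j < s := lt_of_le_of_ne hj hjs
            rcases Nat.eq_zero_or_pos j with rfl | hj1
            · have hi1 : 1 ≤ i := by omega
              rw [my_addEdge_comm]
              exact WAA 0 i h0s hi' hi1 (fun e => hij e.symm)
            · exact WAA i j hi' hj' hj1 hij
      · -- v ∈ B l
        by_cases his : i = s
        · subst his
          rcases Nat.eq_zero_or_pos l with rfl | hl1
          · exact WAsB0 v hvB
          · exact absurd (adjAsB l hl1 hl v hvB) hnadj
        · have hi' : i < s := lt_of_le_of_ne hi his
          by_cases hcond : i = 0 ∨ l ≠ i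
          · exact absurd (adjAB i hi' l hl hcond v hvB) hnadj
          · push_neg at hcond
            obtain ⟨hi0, rfl⟩ := hcond
            exact WAB l (Nat.one_le_iff_ne_zero.mpr hi0) hl v hvB
      · -- v = x
        by_cases his : i = s
        · subst his
          exact Wd
        · exact absurd (adjAx i (lt_of_le_of_ne hi his)) hnadj
    · -- u = x, v ∈ B j
      by_cases hvbb : v = bb
      · subst hvbb
        exact We
      · exact absurd (adjxz v hvbb (dxB j hj v hvB).symm
          (dAB s le_rfl j hj v hvB).symm) hnadj
    · -- u ∈ B j, v ∈ B k
      rcases Nat.eq_zero_or_pos j with rfl | hj1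
      · rcases Nat.eq_zero_or_pos k with rfl | hk1
        · exact absurd (adjB0 u huB v hvB huv) hnadj
        · exact Wf u huB k hk1 hk v hvB
      · rcases Nat.eq_zero_or_pos k with rfl | hk1
        · rw [my_addEdge_comm]
          exact Wf v hvB j hj1 hj u huB
        · exact absurd (adjBB j hj1 hj k hk1 hk u huB v hvB huv) hnadj
  have upper2 : ∀ u v : V, u ≠ v → ¬ G.Adj u v →
      ∃ D : Finset V, D.card = 2 ∧ (G.addEdge u v).IsCDS ↑D := by
    intro u v huv hnadj
    rcases hcov u with hu | ⟨j, hj, huB⟩ | hux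
    · exact aux u v huv hnadj (Or.inl hu)
    · rcases hcov v with ⟨i, hi, rfl⟩ | ⟨k, hk, hvB⟩ | hvx
      · rw [my_addEdge_comm]
        exact aux (A i) u huv.symm (fun ha => hnadj ha.symm) (Or.inl ⟨i, hi, rfl⟩)
      · exact aux u v huv hnadj (Or.inr (Or.inr ⟨⟨j, hj, huB⟩, ⟨k, hk, hvB⟩⟩))
      · rw [my_addEdge_comm]
        exact aux v u huv.symm (fun ha => hnadj ha.symm) (Or.inr (Or.inl ⟨hvx, j, hj, huB⟩))
    · rcases hcov v with ⟨i, hi, rfl⟩ | ⟨k, hk, hvB⟩ | hvx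
      · rw [my_addEdge_comm]
        exact aux (A i) u huv.symm (fun ha => hnadj ha.symm) (Or.inl ⟨i, hi, rfl⟩)
      · exact aux u v huv hnadj (Or.inr (Or.inl ⟨hux, k, hk, hvB⟩))
      · exact absurd (hux.trans hvx.symm) huv
  refine ⟨part1, fun u v huv hnadj => ?_⟩
  exact cdn_eq _ 2 (upper2 u v huv hnadj) (lb2 u v huv)
end

section
/- Let G be a graph in the family 𝒢₁(b₀, 1, 1, ..., 1) (i.e., b_i = 1 for 1 ≤ i ≤ s−1). Then B₁ ∪ ... ∪ B_{s−1} is a minimum vertex cut of size s − 1 and {a₀, a₁, ..., a_s} is a maximum independent set of size s + 1; hence α(G) = κ(G) + 2. -/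
open SimpleGraph Finset

variable {V : Type*}

section G1Aux

variable {V : Type*} {G : SimpleGraph V} {s : ℕ} {A : ℕ → V} {B : ℕ → Finset V} {x bb : V}

lemma G1.exists_not_mem {α : Type*} {S N : Finset α} (h : S.card < N.card) :
    ∃ u ∈ N, u ∉ S := by
  by_contra hc
  push_neg at hc
  exact absurd (Finset.card_le_card hc) (not_le.mpr h)

lemma G1.no_reach {W : Type*} {H : SimpleGraph W} {u v : W}
    (hne : u ≠ v) (hv : ∀ w, ¬ H.Adj v w) : ¬ H.Reachable u v := by
  intro hr
  obtain ⟨p⟩ := hr.symm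
  cases p with
  | nil => exact hne rfl
  | cons ha q => exact hv _ ha

lemma G1.adj_A_Bk (h : G.G1Witness s A B x bb) {i k : ℕ} (hi : i ≤ s) (hk0 : 0 < k)
    (hks : k < s) (hik : i ≠ k) {c : V} (hc : c ∈ B k) : G.Adj (A i) c := by
  obtain ⟨hs, hAinj, hBne, hBd, hAB, hxB, hxA, hbb, hcov, hadj⟩ := h
  rw [hadj]
  refine ⟨fun he => hAB i hi k hks (he ▸ hc), Or.inl ?_⟩
  unfold G1Half
  rcases eq_or_ne i 0 with rfl | hi0
  · exact Or.inl ⟨rfl, Or.inr ⟨k, hks, hc⟩⟩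
  rcases eq_or_ne i s with rfl | his
  · exact Or.inr (Or.inr (Or.inl ⟨rfl, k, hk0, by omega, hc⟩))
  · exact Or.inr (Or.inl ⟨i, by omega, by omega, rfl, Or.inr ⟨k, hks, fun he => hik he.symm, hc⟩⟩)

lemma G1.adj_A_B0 (h : G.G1Witness s A B x bb) {i : ℕ} (hi : i < s)
    {c : V} (hc : c ∈ B 0) : G.Adj (A i) c := by
  obtain ⟨hs, hAinj, hBne, hBd, hAB, hxB, hxA, hbb, hcov, hadj⟩ := h
  rw [hadj]
  refine ⟨fun he => hAB i (by omega) 0 (by omega) (he ▸ hc), Or.inl ?_⟩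
  unfold G1Half
  rcases eq_or_ne i 0 with rfl | hi0
  · exact Or.inl ⟨rfl, Or.inr ⟨0, by omega, hc⟩⟩
  · exact Or.inr (Or.inl ⟨i, by omega, by omega, rfl, Or.inr ⟨0, by omega, fun he => hi0 he.symm, hc⟩⟩)

lemma G1.adj_A_x (h : G.G1Witness s A B x bb) {i : ℕ} (hi : i < s) : G.Adj (A i) x := by
  obtain ⟨hs, hAinj, hBne, hBd, hAB, hxB, hxA, hbb, hcov, hadj⟩ := h
  rw [hadj]
  refine ⟨fun he => hxA i (by omega) he.symm, Or.inl ?_⟩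
  unfold G1Half
  rcases eq_or_ne i 0 with rfl | hi0
  · exact Or.inl ⟨rfl, Or.inl rfl⟩
  · exact Or.inr (Or.inl ⟨i, by omega, by omega, rfl, Or.inl rfl⟩)

lemma G1.adj_x (h : G.G1Witness s A B x bb) {w : V} (h1 : w ≠ x) (h2 : w ≠ bb)
    (h3 : w ≠ A s) : G.Adj x w := by
  obtain ⟨hs, hAinj, hBne, hBd, hAB, hxB, hxA, hbb, hcov, hadj⟩ := h
  rw [hadj]
  refine ⟨fun he => h1 he.symm, Or.inl ?_⟩
  unfold G1Half
  exact Or.inr (Or.inr (Or.inr (Or.inl ⟨rfl, h2, h1, h3⟩)))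

lemma G1.adj_BB (h : G.G1Witness s A B x bb) {k k' : ℕ} (hk0 : 0 < k) (hks : k < s)
    (hk0' : 0 < k') (hks' : k' < s) {c c' : V} (hc : c ∈ B k) (hc' : c' ∈ B k')
    (hne : c ≠ c') : G.Adj c c' := by
  obtain ⟨hs, hAinj, hBne, hBd, hAB, hxB, hxA, hbb, hcov, hadj⟩ := h
  rw [hadj]
  refine ⟨hne, Or.inl ?_⟩
  unfold G1Half
  exact Or.inr (Or.inr (Or.inr (Or.inr (Or.inl ⟨⟨k, hk0, by omega, hc⟩, ⟨k', hk0', by omega, hc'⟩⟩))))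

lemma G1.adj_B0 (h : G.G1Witness s A B x bb) {c c' : V} (hc : c ∈ B 0) (hc' : c' ∈ B 0)
    (hne : c ≠ c') : G.Adj c c' := by
  obtain ⟨hs, hAinj, hBne, hBd, hAB, hxB, hxA, hbb, hcov, hadj⟩ := h
  rw [hadj]
  exact ⟨hne, Or.inl (Or.inr (Or.inr (Or.inr (Or.inr (Or.inr ⟨hc, hc'⟩)))))⟩

lemma G1.not_adj_AA (h : G.G1Witness s A B x bb) {i j : ℕ} (hi : i ≤ s) (hj : j ≤ s) :
    ¬ G.Adj (A i) (A j) := by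
  obtain ⟨hs, hAinj, hBne, hBd, hAB, hxB, hxA, hbb, hcov, hadj⟩ := id h
  have half : ∀ i' j' : ℕ, i' ≤ s → j' ≤ s → ¬ G1Half s A B x bb (A i') (A j') := by
    intro i' j' hi' hj' hh
    rcases hh with ⟨hp, (hq | ⟨j2, hj2, hq⟩)⟩ |
      ⟨i2, h1, h2, hp, (hq | ⟨j2, hj2, _, hq⟩)⟩ |
      ⟨hp, j2, h1, h2, hq⟩ | ⟨hp, _⟩ | ⟨⟨k2, h1, h2, hp⟩, _⟩ | ⟨hp, _⟩
    · exact hxA j' hj' hq.symm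
    · exact hAB j' hj' j2 hj2 hq
    · exact hxA j' hj' hq.symm
    · exact hAB j' hj' j2 hj2 hq
    · exact hAB j' hj' j2 (by omega) hq
    · exact hxA i' hi' hp.symm
    · exact hAB i' hi' k2 (by omega) hp
    · exact hAB i' hi' 0 (by omega) hp
  intro hadj'
  rcases (hadj _ _).mp hadj' with ⟨_, hh | hh⟩
  · exact half i j hi hj hh
  · exact half j i hj hi hh

lemma G1.adj_As (h : G.G1Witness s A B x bb) {w : V} (ha : G.Adj (A s) w) :
    ∃ k, 0 < k ∧ k < s ∧ w ∈ B k := by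
  obtain ⟨hs, hAinj, hBne, hBd, hAB, hxB, hxA, hbb, hcov, hadj⟩ := id h
  rcases (hadj _ _).mp ha with ⟨hne, hh | hh⟩
  · rcases hh with ⟨hp, _⟩ | ⟨i2, h1, h2, hp, _⟩ | ⟨_, j2, h1, h2, hq⟩ |
      ⟨hp, _⟩ | ⟨⟨k2, h1, h2, hp⟩, _⟩ | ⟨hp, _⟩
    · exact absurd (hAinj s le_rfl 0 (by omega) hp) (by omega)
    · exact absurd (hAinj s le_rfl i2 (by omega) hp) (by omega)
    · exact ⟨j2, by omega, by omega, hq⟩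
    · exact absurd hp.symm (hxA s le_rfl)
    · exact absurd hp (hAB s le_rfl k2 (by omega))
    · exact absurd hp (hAB s le_rfl 0 (by omega))
  · rcases hh with ⟨_, (hq | ⟨j2, hj2, hq⟩)⟩ |
      ⟨i2, h1, h2, _, (hq | ⟨j2, hj2, _, hq⟩)⟩ |
      ⟨_, j2, h1, h2, hq⟩ | ⟨_, _, _, hq⟩ | ⟨_, ⟨k2, h1, h2, hq⟩⟩ | ⟨_, hq⟩
    · exact absurd hq.symm (hxA s le_rfl)
    · exact absurd hq (hAB s le_rfl j2 hj2)
    · exact absurd hq.symm (hxA s le_rfl)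
    · exact absurd hq (hAB s le_rfl j2 hj2)
    · exact absurd hq (hAB s le_rfl j2 (by omega))
    · exact absurd rfl hq
    · exact absurd hq (hAB s le_rfl k2 (by omega))
    · exact absurd hq (hAB s le_rfl 0 (by omega))

lemma G1.T_card [DecidableEq V] (h : G.G1Witness s A B x bb)
    (hb : ∀ j, 1 ≤ j → j < s → (B j).card = 1) :
    ((Finset.Ioo 0 s).biUnion B).card = s - 1 := by
  obtain ⟨hs, hAinj, hBne, hBd, hAB, hxB, hxA, hbb, hcov, hadj⟩ := id h
  rw [Finset.card_biUnion (fun i hi j hj hij =>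
    hBd i (Finset.mem_Ioo.mp hi).2 j (Finset.mem_Ioo.mp hj).2 hij)]
  rw [Finset.sum_congr rfl (fun k hk =>
    hb k (Finset.mem_Ioo.mp hk).1 (Finset.mem_Ioo.mp hk).2)]
  rw [Finset.sum_const, smul_eq_mul, mul_one, Nat.card_Ioo]; omega

end G1Aux

section G1Conn

variable {V : Type*} {G : SimpleGraph V} {s : ℕ} {A : ℕ → V} {B : ℕ → Finset V} {x bb : V}

lemma G1.connected_of_small [DecidableEq V] (h : G.G1Witness s A B x bb)
    (hb : ∀ j, 1 ≤ j → j < s → (B j).card = 1)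
    {S : Finset V} (hS : S.card ≤ s - 2) :
    (G.induce ((↑S : Set V)ᶜ)).Connected := by
  obtain ⟨hs, hAinj, hBne, hBd, hAB, hxB, hxA, hbb, hcov, hadj⟩ := id h
  have hTcard := G1.T_card h hb
  have hlt : S.card < ((Finset.Ioo 0 s).biUnion B).card := by omega
  obtain ⟨c, hcT, hcS⟩ := G1.exists_not_mem hlt
  obtain ⟨j, hjmem, hcj⟩ := Finset.mem_biUnion.mp hcT
  obtain ⟨hj0, hjs⟩ := Finset.mem_Ioo.mp hjmem
  have hcx : c ≠ x := fun he => hxB j hjs (he ▸ hcj)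
  have hcbb : c ≠ bb := fun he =>
    (Finset.disjoint_left.mp (hBd j hjs 0 (by omega) (by omega)) hcj) (he ▸ hbb)
  have hcAs : c ≠ A s := fun he => hAB s le_rfl j hjs (he ▸ hcj)
  have hxc : G.Adj x c := G1.adj_x h hcx hcbb hcAs
  have key : ∀ w ∉ S, w = c ∨ G.Adj w c ∨ ∃ u, u ∉ S ∧ G.Adj w u ∧ G.Adj u c := by
    intro w hwS
    rcases hcov w with ⟨i, his, rfl⟩ | ⟨k, hks, hwk⟩ | rfl
    · -- w = A i
      rcases eq_or_ne i j with rfl | hij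
      · right; right
        have hxN : x ∉ ((Finset.Ioo 0 s).erase i).biUnion B := by
          intro hx
          obtain ⟨k, hk, hxk⟩ := Finset.mem_biUnion.mp hx
          exact hxB k (Finset.mem_Ioo.mp (Finset.mem_of_mem_erase hk)).2 hxk
        have hNcard : (insert x (((Finset.Ioo 0 s).erase i).biUnion B)).card = s - 1 := by
          rw [Finset.card_insert_of_notMem hxN,
            Finset.card_biUnion (fun a ha b hb' hab =>
              hBd a (Finset.mem_Ioo.mp (Finset.mem_of_mem_erase ha)).2
                b (Finset.mem_Ioo.mp (Finset.mem_of_mem_erase hb')).2 hab)]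
          rw [Finset.sum_congr rfl (fun k hk =>
            hb k (Finset.mem_Ioo.mp (Finset.mem_of_mem_erase hk)).1
              (Finset.mem_Ioo.mp (Finset.mem_of_mem_erase hk)).2)]
          rw [Finset.sum_const, smul_eq_mul, mul_one,
            Finset.card_erase_of_mem hjmem, Nat.card_Ioo]
          omega
        obtain ⟨u, huN, huS⟩ := G1.exists_not_mem
          (show S.card < (insert x (((Finset.Ioo 0 s).erase i).biUnion B)).card by omega)
        rcases Finset.mem_insert.mp huN with rfl | huB
        · exact ⟨u, huS, G1.adj_A_x h (by omega), hxc⟩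
        · obtain ⟨k, hk, huk⟩ := Finset.mem_biUnion.mp huB
          have hki : k ≠ i := Finset.ne_of_mem_erase hk
          have hk' := Finset.mem_Ioo.mp (Finset.mem_of_mem_erase hk)
          have hune : u ≠ c := fun he =>
            (Finset.disjoint_left.mp (hBd k hk'.2 i hjs hki) huk) (he ▸ hcj)
          exact ⟨u, huS, G1.adj_A_Bk h his hk'.1 hk'.2 hki.symm huk,
            G1.adj_BB h hk'.1 hk'.2 hj0 hjs huk hcj hune⟩
      · exact Or.inr (Or.inl (G1.adj_A_Bk h his hj0 hjs hij hcj))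
    · -- w ∈ B k
      rcases eq_or_ne k 0 with rfl | hk0
      · right; right
        have hNcard : (((Finset.range s).erase j).image A).card = s - 1 := by
          rw [Finset.card_image_of_injOn (fun a ha b hb' hab =>
            hAinj a (by have := Finset.mem_range.mp (Finset.mem_of_mem_erase ha); omega)
              b (by have := Finset.mem_range.mp (Finset.mem_of_mem_erase hb'); omega) hab),
            Finset.card_erase_of_mem (Finset.mem_range.mpr hjs), Finset.card_range]
        obtain ⟨u, huN, huS⟩ := G1.exists_not_mem
          (show S.card < (((Finset.range s).erase j).image A).card by omega)
        obtain ⟨i, hi, rfl⟩ := Finset.mem_image.mp huN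
        have hi' := Finset.mem_range.mp (Finset.mem_of_mem_erase hi)
        have hij := Finset.ne_of_mem_erase hi
        exact ⟨A i, huS, (G1.adj_A_B0 h hi' hwk).symm, G1.adj_A_Bk h (by omega) hj0 hjs hij hcj⟩
      · rcases eq_or_ne k j with rfl | hkj
        · left
          obtain ⟨a, ha⟩ := Finset.card_eq_one.mp (hb k (by omega) hks)
          rw [ha, Finset.mem_singleton] at hwk hcj
          rw [hwk, hcj]
        · right; left
          have hwc : w ≠ c := fun he =>
            (Finset.disjoint_left.mp (hBd k hks j hjs hkj) hwk) (he ▸ hcj)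
          exact G1.adj_BB h (by omega) hks hj0 hjs hwk hcj hwc
    · exact Or.inr (Or.inl hxc)
  have hc' : c ∈ ((↑S : Set V)ᶜ : Set V) := by simpa using hcS
  rw [SimpleGraph.connected_iff]
  have ind : ∀ (a b : V) (ha : a ∈ ((↑S : Set V)ᶜ : Set V)) (hb : b ∈ ((↑S : Set V)ᶜ : Set V)),
      G.Adj a b → (G.induce ((↑S : Set V)ᶜ)).Adj ⟨a, ha⟩ ⟨b, hb⟩ := by
    intro a b ha hb hab
    simpa using hab
  have hreach : ∀ v : ((↑S : Set V)ᶜ : Set V),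
      (G.induce ((↑S : Set V)ᶜ)).Reachable ⟨c, hc'⟩ v := by
    rintro ⟨w, hw⟩
    have hwS : w ∉ S := by simpa using hw
    rcases key w hwS with rfl | hadj' | ⟨u, huS, h1, h2⟩
    · exact SimpleGraph.Reachable.refl _
    · exact (SimpleGraph.Adj.reachable (ind c w hc' hw hadj'.symm))
    · have hu' : u ∈ ((↑S : Set V)ᶜ : Set V) := by simpa using huS
      exact ((SimpleGraph.Adj.reachable (ind c u hc' hu' h2.symm)).trans
        (SimpleGraph.Adj.reachable (ind u w hu' hw h1.symm)))
  exact ⟨fun u v => (hreach u).symm.trans (hreach v), ⟨⟨c, hc'⟩⟩⟩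

end G1Conn

theorem stmt_13 {V : Type*} [Fintype V] [DecidableEq V] (G : SimpleGraph V)
    (s : ℕ) (A : ℕ → V) (B : ℕ → Finset V) (x bb : V)
    (h : G.G1Witness s A B x bb)
    (hb : ∀ j, 1 ≤ j → j < s → (B j).card = 1) :
    G.IsVertexCut ((Finset.Ioo 0 s).biUnion B) ∧
      ((Finset.Ioo 0 s).biUnion B).card = s - 1 ∧
      ((Finset.Ioo 0 s).biUnion B).card = G.conn ∧
      G.IsIndepSet' ↑((Finset.range (s + 1)).image A) ∧
      ((Finset.range (s + 1)).image A).card = s + 1 ∧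
      ((Finset.range (s + 1)).image A).card = G.indepNum' ∧
      G.indepNum' = G.conn + 2 := by
  obtain ⟨hs, hAinj, hBne, hBd, hAB, hxB, hxA, hbb, hcov, hadj⟩ := id h
  set T : Finset V := (Finset.Ioo 0 s).biUnion B with hT
  have hTcard : T.card = s - 1 := G1.T_card h hb
  -- the cut
  have hAsT : ∀ w, G.Adj (A s) w → w ∈ T := by
    intro w hw
    obtain ⟨k, hk0, hks, hwk⟩ := G1.adj_As h hw
    exact Finset.mem_biUnion.mpr ⟨k, Finset.mem_Ioo.mpr ⟨hk0, hks⟩, hwk⟩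
  have hxT : x ∉ T := by
    intro hx
    obtain ⟨k, hk, hxk⟩ := Finset.mem_biUnion.mp hx
    exact hxB k (Finset.mem_Ioo.mp hk).2 hxk
  have hAsT' : A s ∉ T := by
    intro hx
    obtain ⟨k, hk, hxk⟩ := Finset.mem_biUnion.mp hx
    exact hAB s le_rfl k (Finset.mem_Ioo.mp hk).2 hxk
  have hx' : x ∈ ((↑T : Set V)ᶜ : Set V) := by simpa using hxT
  have hA' : A s ∈ ((↑T : Set V)ᶜ : Set V) := by simpa using hAsT'
  have cut : G.IsVertexCut T := by
    intro hconn
    refine G1.no_reach (u := (⟨x, hx'⟩ : ((↑T : Set V)ᶜ : Set V)))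
      (v := ⟨A s, hA'⟩) ?_ ?_ (hconn.preconnected _ _)
    · intro he
      exact hxA s le_rfl (congrArg Subtype.val he)
    · rintro ⟨w, hw⟩ hadj'
      have : G.Adj (A s) w := by simpa using hadj'
      exact (by simpa using hw : w ∉ T) (hAsT w this)
  -- connectivity value
  have hconnval : G.conn = s - 1 := by
    unfold SimpleGraph.conn
    apply le_antisymm
    · exact Nat.sInf_le ⟨T, hTcard, cut⟩
    · refine le_csInf ⟨s - 1, T, hTcard, cut⟩ ?_
      rintro n ⟨S, rfl, hScut⟩
      by_contra hn
      push_neg at hn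
      exact hScut (G1.connected_of_small h hb (by omega))
  -- independent set
  have hAcard : ((Finset.range (s + 1)).image A).card = s + 1 := by
    rw [Finset.card_image_of_injOn (fun a ha b hb' hab =>
      hAinj a (by have := Finset.mem_range.mp ha; omega)
        b (by have := Finset.mem_range.mp hb'; omega) hab), Finset.card_range]
  have hindepA : G.IsIndepSet' ↑((Finset.range (s + 1)).image A) := by
    intro a ha b hb' hne'
    simp only [Finset.coe_image, Set.mem_image, Finset.mem_coe, Finset.mem_range] at ha hb'
    obtain ⟨i, hi, rfl⟩ := ha
    obtain ⟨j, hj, rfl⟩ := hb'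
    exact G1.not_adj_AA h (by omega) (by omega)
  -- upper bound for independent sets
  have hub : ∀ I : Finset V, G.IsIndepSet' ↑I → I.card ≤ s + 1 := by
    intro I hI
    have hInd : ∀ a ∈ I, ∀ b ∈ I, a ≠ b → ¬ G.Adj a b := by
      intro a ha b hb2 hne
      exact hI (Finset.mem_coe.mpr ha) (Finset.mem_coe.mpr hb2) hne
    have hIT : (I ∩ T).card ≤ 1 := by
      rw [Finset.card_le_one]
      intro a ha b hb2
      by_contra hne'
      obtain ⟨haI, haT⟩ := Finset.mem_inter.mp ha
      obtain ⟨hbI, hbT⟩ := Finset.mem_inter.mp hb2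
      obtain ⟨k, hk, hak⟩ := Finset.mem_biUnion.mp haT
      obtain ⟨k', hk', hbk⟩ := Finset.mem_biUnion.mp hbT
      exact hInd a haI b hbI hne' (G1.adj_BB h (Finset.mem_Ioo.mp hk).1 (Finset.mem_Ioo.mp hk).2
        (Finset.mem_Ioo.mp hk').1 (Finset.mem_Ioo.mp hk').2 hak hbk hne')
    by_cases hxI : x ∈ I
    · have hsub : I ⊆ {x, bb, A s} := by
        intro w hw
        simp only [Finset.mem_insert, Finset.mem_singleton]
        by_contra hcon
        push_neg at hcon
        obtain ⟨h1, h2, h3⟩ := hcon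
        exact hInd x hxI w hw (Ne.symm h1) (G1.adj_x h h1 h2 h3)
      have h3 : ({x, bb, A s} : Finset V).card ≤ 3 := by
        have h1 := Finset.card_insert_le x ({bb, A s} : Finset V)
        have h2 := Finset.card_insert_le bb ({A s} : Finset V)
        simp only [Finset.card_singleton] at h1 h2 ⊢
        omega
      have := Finset.card_le_card hsub
      omega
    · by_cases hb0 : ∃ b', b' ∈ I ∧ b' ∈ B 0
      · obtain ⟨b', hbI', hb0'⟩ := hb0
        have hsub : I ⊆ insert b' (insert (A s) (I ∩ T)) := by
          intro w hw
          by_cases hwb : w = b'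
          · simp [hwb]
          simp only [Finset.mem_insert]
          rcases hcov w with ⟨i, his, rfl⟩ | ⟨k, hks, hwk⟩ | rfl
          · rcases eq_or_ne i s with rfl | his'
            · exact Or.inr (Or.inl rfl)
            · exact absurd (G1.adj_A_B0 h (by omega) hb0') (hInd (A i) hw b' hbI' hwb)
          · rcases eq_or_ne k 0 with rfl | hk0
            · exact absurd (G1.adj_B0 h hb0' hwk (Ne.symm hwb)) (hInd b' hbI' w hw (Ne.symm hwb))
            · exact Or.inr (Or.inr (Finset.mem_inter.mpr ⟨hw,
                Finset.mem_biUnion.mpr ⟨k, Finset.mem_Ioo.mpr ⟨by omega, hks⟩, hwk⟩⟩))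
          · exact absurd hw hxI
        have h1 := Finset.card_le_card hsub
        have h2 := Finset.card_insert_le b' (insert (A s) (I ∩ T))
        have h3 := Finset.card_insert_le (A s) (I ∩ T)
        omega
      · push_neg at hb0
        by_cases hcB : ∃ c k, c ∈ I ∧ 0 < k ∧ k < s ∧ c ∈ B k
        · obtain ⟨c, k, hcI, hk0, hks, hck⟩ := hcB
          have hsub : I ⊆ {A k, c} := by
            intro w hw
            by_cases hwc : w = c
            · simp [hwc]
            simp only [Finset.mem_insert, Finset.mem_singleton]
            rcases hcov w with ⟨i, his, rfl⟩ | ⟨m, hms, hwm⟩ | rfl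
            · rcases eq_or_ne i k with rfl | hik
              · exact Or.inl rfl
              · exact absurd (G1.adj_A_Bk h his hk0 hks hik hck) (hInd (A i) hw c hcI hwc)
            · rcases eq_or_ne m 0 with rfl | hm0
              · exact absurd hwm (hb0 w hw)
              · exact absurd (G1.adj_BB h (by omega) hms hk0 hks hwm hck hwc)
                  (hInd w hw c hcI hwc)
            · exact absurd hw hxI
          have h1 := Finset.card_le_card hsub
          have h2 := Finset.card_insert_le (A k) ({c} : Finset V)
          simp only [Finset.card_singleton] at h2
          omega
        · push_neg at hcB
          have hsub : I ⊆ (Finset.range (s + 1)).image A := by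
            intro w hw
            rcases hcov w with ⟨i, his, rfl⟩ | ⟨k, hks, hwk⟩ | rfl
            · exact Finset.mem_image.mpr ⟨i, Finset.mem_range.mpr (by omega), rfl⟩
            · rcases eq_or_ne k 0 with rfl | hk0
              · exact absurd hwk (hb0 w hw)
              · exact absurd hwk (hcB w k hw (by omega) hks)
            · exact absurd hw hxI
          have := Finset.card_le_card hsub
          omega
  -- independence number value
  have hiN : G.indepNum' = s + 1 := by
    unfold SimpleGraph.indepNum'
    apply le_antisymm
    · refine csSup_le ⟨s + 1, (Finset.range (s + 1)).image A, hindepA, hAcard⟩ ?_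
      rintro n ⟨I, hI, rfl⟩
      exact hub I hI
    · refine le_csSup ⟨s + 1, fun n hn => ?_⟩
        ⟨(Finset.range (s + 1)).image A, hindepA, hAcard⟩
      obtain ⟨I, hI, hc⟩ := hn
      exact hc ▸ hub I hI
  refine ⟨cut, hTcard, ?_, hindepA, hAcard, ?_, ?_⟩
  · rw [hTcard, hconnval]
  · rw [hAcard, hiN]
  · rw [hiN, hconnval]
    omega
end
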